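/- arXiv:1410.4810 — 2 statements merged into one kernel-verified Lean document; each statement's English description precedes it below -/
import Mathlib

section
/- Let 0 < p ≤ ∞ and 0 < α < ∞, and let γ be a real number. The function f(z) = (1-z)^{-γ} belongs to H(p,∞,α) if and only if γ ≤ α + 1/p. -/
open MeasureTheory Real Set Filter ENNReal

noncomputable section

/-- The `p`-th integral mean of `f` on the circle of radius `r` (with `p = ∞` allowed,
giving the sup of `|f|` on the circle). -/
def intMean (p : ℝ≥0∞) (f : ℂ → ℂ) (r : ℝ) : ℝ :=
  if p = ⊤ then
    sSup ((fun θ : ℝ => ‖f (r * Complex.exp (θ * Complex.I))‖) '' Set.Icc 0 (2 * π))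
  else
    ((1 / (2 * π)) * ∫ θ in (0:ℝ)..(2 * π),
        ‖f (r * Complex.exp (θ * Complex.I))‖ ^ p.toReal) ^ (1 / p.toReal)

/-- The mixed norm `‖f‖_{p,q,α}` (with the sup-version when `q = ∞`). -/
def mixedNorm (p q : ℝ≥0∞) (α : ℝ) (f : ℂ → ℂ) : ℝ :=
  if q = ⊤ then
    sSup ((fun r : ℝ => (1 - r) ^ α * intMean p f r) '' Set.Ico 0 1)
  else
    (α * q.toReal * ∫ r in (0:ℝ)..1,
        (1 - r) ^ (α * q.toReal - 1) * intMean p f r ^ q.toReal) ^ (1 / q.toReal)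

/-- Membership in the mixed norm space `H(p,q,α)`: `f` is analytic on the unit disk and
its mixed norm is finite (for `q < ∞` this means the defining integral converges; for
`q = ∞` that the relevant family is bounded). -/
def MemH (p q : ℝ≥0∞) (α : ℝ) (f : ℂ → ℂ) : Prop :=
  AnalyticOn ℂ f (Metric.ball 0 1) ∧
  if q = ⊤ then
    BddAbove ((fun r : ℝ => (1 - r) ^ α * intMean p f r) '' Set.Ico 0 1)
  else
    IntervalIntegrable
      (fun r : ℝ => (1 - r) ^ (α * q.toReal - 1) * intMean p f r ^ q.toReal)
      MeasureTheory.volume 0 1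

/-- The Euler Beta function `B(a,b) = ∫_0^1 (1-x)^{a-1} x^{b-1} dx`. -/
def betaFn (a b : ℝ) : ℝ := ∫ x in (0:ℝ)..1, (1 - x) ^ (a - 1) * x ^ (b - 1)

end
namespace PowHAux
open Real Set intervalIntegral

noncomputable def A (r θ : ℝ) : ℝ := ‖1 - (r:ℂ) * Complex.exp (θ * Complex.I)‖

lemma A_nonneg (r θ : ℝ) : 0 ≤ A r θ := norm_nonneg _

lemma abs_rexp (r θ : ℝ) (hr : 0 ≤ r) : ‖(r:ℂ) * Complex.exp (θ * Complex.I)‖ = r := by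
  simp [map_mul, Complex.norm_exp_ofReal_mul_I, abs_of_nonneg hr]

lemma A_ge (r θ : ℝ) (hr : 0 ≤ r) : 1 - r ≤ A r θ := by
  have h := norm_sub_norm_le (1:ℂ) ((r:ℂ) * Complex.exp (θ * Complex.I))
  simpa [A, map_mul, Complex.norm_exp_ofReal_mul_I, abs_of_nonneg hr] using h

lemma A_pos (r θ : ℝ) (hr : 0 ≤ r) (hr1 : r < 1) : 0 < A r θ :=
  lt_of_lt_of_le (by linarith) (A_ge r θ hr)

lemma A_le_two (r θ : ℝ) (hr : 0 ≤ r) (hr1 : r ≤ 1) : A r θ ≤ 2 := by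
  have h := norm_sub_le (1:ℂ) ((r:ℂ) * Complex.exp (θ * Complex.I))
  rw [A]
  refine h.trans ?_
  simp [abs_rexp r θ hr, abs_of_nonneg hr]; linarith

lemma A_sq (r θ : ℝ) : A r θ ^ 2 = (1 - r)^2 + 2*r*(1 - Real.cos θ) := by
  rw [A, Complex.sq_norm, Complex.normSq_apply]
  simp only [Complex.sub_re, Complex.sub_im, Complex.one_re, Complex.one_im, Complex.mul_re,
    Complex.mul_im, Complex.ofReal_re, Complex.ofReal_im, Complex.exp_ofReal_mul_I_re,
    Complex.exp_ofReal_mul_I_im]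
  linear_combination (r^2) * Real.sin_sq_add_cos_sq θ

lemma A_le_small (r θ : ℝ) (hr : 0 ≤ r) (hr1 : r ≤ 1) (hθ0 : 0 ≤ θ) (hθ : θ ≤ 1 - r) :
    A r θ ≤ 2 * (1 - r) := by
  have hsq := A_sq r θ
  have h1 : 1 - θ^2/2 ≤ Real.cos θ := Real.one_sub_sq_div_two_le_cos
  nlinarith [A_nonneg r θ]

lemma A_ge_big (r θ : ℝ) (hr : 0 ≤ r) (hr1 : r < 1) (hθ0 : 0 ≤ θ) (hθ : θ ≤ π) :
    (1 - r + θ)/10 ≤ A r θ := by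
  have hsq := A_sq r θ
  have hπ : π ≤ 4 := Real.pi_le_four
  have hπ0 : 0 < π := Real.pi_pos
  rcases le_or_gt (1/2 : ℝ) r with h | h
  · have hs : Real.sin (θ/2)^2 = 1/2 - Real.cos θ / 2 := by
      have := Real.sin_sq_eq_half_sub (θ/2); rwa [mul_div_cancel₀] at this; norm_num
    have hj : 2/π * (θ/2) ≤ Real.sin (θ/2) :=
      Real.mul_le_sin (by linarith) (by linarith)
    have hθπ : θ/π ≤ Real.sin (θ/2) := le_trans (le_of_eq (by field_simp)) hj
    have h0 : (0:ℝ) ≤ θ/π := by positivity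
    have h2 : (θ/π)^2 ≤ 1/2 - Real.cos θ / 2 := by nlinarith
    have h4 : θ^2/16 ≤ (θ/π)^2 := by
      rw [div_pow]
      apply div_le_div_of_nonneg_left (sq_nonneg θ) (by positivity) (by nlinarith)
    have hA : (1-r)^2 + θ^2/8 ≤ A r θ^2 := by nlinarith
    have h10 : (0:ℝ) ≤ (1 - r + θ)/10 := by nlinarith
    have hfin : ((1 - r + θ)/10)^2 ≤ A r θ^2 := by nlinarith [sq_nonneg ((1-r) - θ)]
    exact (pow_le_pow_iff_left₀ h10 (A_nonneg r θ) two_ne_zero).mp hfin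
  · linarith [A_ge r θ hr]

lemma A_symm (r θ : ℝ) : A r (2*π - θ) = A r θ := by
  have h1 := A_sq r (2*π - θ)
  have h2 := A_sq r θ
  rw [Real.cos_two_pi_sub] at h1
  have h3 : A r (2*π-θ)^2 = A r θ^2 := by rw [h1, h2]
  exact (pow_left_inj₀ (A_nonneg r _) (A_nonneg r _) two_ne_zero).mp h3

lemma abs_F (γ r θ : ℝ) :
    ‖(1 - (r:ℂ) * Complex.exp (θ * Complex.I)) ^ (-(γ:ℂ))‖ = A r θ ^ (-γ) := by
  have h : (-(γ:ℂ)) = ((-γ : ℝ) : ℂ) := by push_cast; ring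
  rw [h, Complex.norm_cpow_real]; rfl

lemma contA (r : ℝ) : Continuous (fun θ : ℝ => A r θ) := by
  unfold A
  exact continuous_norm.comp (by fun_prop)

lemma contApow (r s : ℝ) (hr : 0 ≤ r) (hr1 : r < 1) :
    Continuous (fun θ : ℝ => A r θ ^ s) := by
  apply Continuous.rpow_const (contA r)
  exact fun θ => Or.inl (ne_of_gt (A_pos r θ hr hr1))

lemma intble (r s a b : ℝ) (hr : 0 ≤ r) (hr1 : r < 1) :
    IntervalIntegrable (fun θ : ℝ => A r θ ^ s) MeasureTheory.volume a b :=
  (contApow r s hr hr1).intervalIntegrable a b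

lemma int_sym (r s : ℝ) (hr : 0 ≤ r) (hr1 : r < 1) :
    ∫ θ in (0:ℝ)..(2*π), A r θ ^ s = 2 * ∫ θ in (0:ℝ)..π, A r θ ^ s := by
  have h1 := integral_add_adjacent_intervals (a := (0:ℝ)) (b := π) (c := 2*π)
    (intble r s 0 π hr hr1) (intble r s π (2*π) hr hr1)
  have h2 : ∫ θ in π..(2*π), A r θ ^ s = ∫ θ in (0:ℝ)..π, A r θ ^ s := by
    have h3 := integral_comp_sub_left (a := (0:ℝ)) (b := π) (fun θ => A r θ ^ s) (2*π)
    simp only [sub_zero] at h3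
    rw [show 2*π - π = π by ring] at h3
    rw [← h3]
    apply integral_congr
    intro θ _
    simp [A_symm r θ]
  linarith

lemma ptwise_bound (r β θ : ℝ) (hr : 0 ≤ r) (hr1 : r < 1) (hβ : 0 ≤ β)
    (hθ0 : 0 ≤ θ) (hθ : θ ≤ π) :
    A r θ ^ (-β) ≤ 10^β * (1 - r + θ) ^ (-β) := by
  have h1 : (1 - r + θ)/10 ≤ A r θ := A_ge_big r θ hr hr1 hθ0 hθ
  have h2 : (0:ℝ) < (1 - r + θ)/10 := by
    have : r < 1 := hr1
    apply div_pos (by linarith) (by norm_num)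
  calc A r θ ^ (-β) ≤ ((1 - r + θ)/10) ^ (-β) :=
        Real.rpow_le_rpow_of_nonpos h2 h1 (neg_nonpos.mpr hβ)
    _ = (1 - r + θ) ^ (-β) / 10 ^ (-β) := Real.div_rpow (by linarith) (by norm_num) (-β)
    _ = 10^β * (1 - r + θ) ^ (-β) := by
        rw [Real.rpow_neg (by norm_num : (0:ℝ) ≤ 10)]
        field_simp

lemma int_translate (a e : ℝ) : ∫ θ in (0:ℝ)..π, (a + θ) ^ e = ∫ u in a..(a+π), u ^ e := by
  have h := integral_comp_add_left (a := (0:ℝ)) (b := π) (fun u : ℝ => u ^ e) a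
  simpa using h

lemma int_rpow_le_of_gt_one (a β : ℝ) (ha : 0 < a) (hβ : 1 < β) :
    ∫ θ in (0:ℝ)..π, (a + θ) ^ (-β) ≤ a ^ (1-β) / (β - 1) := by
  have hπ : 0 < π := Real.pi_pos
  rw [int_translate, integral_rpow (Or.inr ⟨by intro h; linarith,
    by rw [Set.uIcc_of_le (by linarith)]; intro h; exact absurd h.1 (by linarith)⟩)]
  have hX : 0 ≤ (a+π) ^ (-β+1) := Real.rpow_nonneg (by linarith) _
  have hd : 0 < β - 1 := by linarith
  rw [show (-β+1) = -(β-1) by ring]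
  rw [div_neg, ← neg_div, neg_sub]
  rw [show (1-β) = -(β-1) by ring]
  gcongr
  rw [show (-β+1) = -(β-1) by ring] at hX
  linarith

lemma int_rpow_le_of_lt_one (a d : ℝ) (ha : 0 < a) (ha1 : a ≤ 1) (hd0 : 0 ≤ d) (hd : d < 1) :
    ∫ θ in (0:ℝ)..π, (a + θ) ^ (-d) ≤ (1 + π)/(1 - d) := by
  have hπ : 0 < π := Real.pi_pos
  rw [int_translate, integral_rpow (Or.inl (by linarith))]
  have hY : 0 ≤ a ^ (-d+1) := Real.rpow_nonneg (by linarith) _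
  have hX : (a+π) ^ (-d+1) ≤ 1 + π := by
    calc (a+π) ^ (-d+1) ≤ (1+π) ^ (-d+1) :=
          Real.rpow_le_rpow (by linarith) (by linarith) (by linarith)
      _ ≤ (1+π) ^ (1:ℝ) := Real.rpow_le_rpow_of_exponent_le (by linarith) (by linarith)
      _ = 1 + π := Real.rpow_one _
  have hdd : 0 < -d + 1 := by linarith
  rw [div_le_div_iff₀ hdd (by linarith : (0:ℝ) < 1 - d)]
  nlinarith

lemma split_pt (a θ m β : ℝ) (ha : 0 < a) (hθ0 : 0 ≤ θ) (hm : 0 ≤ m) :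
    (a + θ)^(-β) ≤ a^(-m) * (a + θ)^(-(β-m)) := by
  have hpos : 0 < a + θ := by linarith
  have heq : (a+θ)^(-β) = (a+θ)^(-m) * (a+θ)^(-(β-m)) := by
    rw [← Real.rpow_add hpos]; ring_nf
  rw [heq]
  apply mul_le_mul_of_nonneg_right _ (Real.rpow_nonneg hpos.le _)
  exact Real.rpow_le_rpow_of_nonpos ha (by linarith) (neg_nonpos.mpr hm)

lemma intble_shift (a e : ℝ) (ha : 0 < a) :
    IntervalIntegrable (fun θ : ℝ => (a + θ) ^ e) MeasureTheory.volume 0 π := by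
  apply ContinuousOn.intervalIntegrable
  apply ContinuousOn.rpow_const (by fun_prop)
  intro x hx
  rw [Set.uIcc_of_le Real.pi_pos.le] at hx
  exact Or.inl (by nlinarith [hx.1])

lemma no_bound {e c K : ℝ} (he : e < 0) (hc : 0 < c)
    (h : ∀ x : ℝ, 0 < x → x ≤ 1 → c * x ^ e ≤ K) : False := by
  set K' := max K c with hK'def
  have hK'c : c ≤ K' := le_max_right _ _
  have hK'K : K ≤ K' := le_max_left _ _
  have hK' : 0 < K' := lt_of_lt_of_le hc hK'c
  have hb0 : 0 < c / (2*K') := by positivity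
  have hb1 : c / (2*K') < 1 := by
    rw [div_lt_one (by positivity)]; linarith
  set x := (c / (2*K')) ^ (-1/e) with hxdef
  have hexp : 0 ≤ -1/e := by
    rw [neg_div, le_neg]
    exact (div_nonpos_of_nonneg_of_nonpos zero_le_one he.le).trans_eq (neg_zero).symm
  have hx0 : 0 < x := Real.rpow_pos_of_pos hb0 _
  have hx1 : x ≤ 1 := Real.rpow_le_one hb0.le hb1.le hexp
  have hxe : x ^ e = 2*K'/c := by
    rw [hxdef, ← Real.rpow_mul hb0.le, div_mul_cancel₀ _ (ne_of_lt he), Real.rpow_neg_one]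
    rw [inv_div]
  have hle := h x hx0 hx1
  rw [hxe] at hle
  have heq : c * (2*K'/c) = 2*K' := by field_simp
  rw [heq] at hle
  linarith

end PowHAux

namespace PowHAux
open Real Set intervalIntegral

lemma intMean_top (γ r : ℝ) :
    intMean ⊤ (fun z : ℂ => (1 - z) ^ (-(γ:ℂ))) r
      = sSup ((fun θ : ℝ => A r θ ^ (-γ)) '' Set.Icc 0 (2*π)) := by
  have h : (fun θ : ℝ => ‖(fun z : ℂ => (1 - z) ^ (-(γ:ℂ)))
      ((r:ℂ) * Complex.exp (θ * Complex.I))‖) = fun θ : ℝ => A r θ ^ (-γ) :=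
    funext fun θ => abs_F γ r θ
  rw [intMean, if_pos rfl, h]

lemma intMean_fin (p : ℝ≥0∞) (hp : p ≠ ⊤) (γ r : ℝ) :
    intMean p (fun z : ℂ => (1 - z) ^ (-(γ:ℂ))) r
      = ((1 / (2*π)) * ∫ θ in (0:ℝ)..(2*π), A r θ ^ (-(γ * p.toReal))) ^ (1 / p.toReal) := by
  rw [intMean, if_neg hp]
  congr 2
  apply intervalIntegral.integral_congr
  intro θ _
  show ‖_‖ ^ p.toReal = _
  rw [abs_F γ r θ, ← Real.rpow_mul (A_nonneg r θ), neg_mul]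

lemma A_zero (r : ℝ) (hr1 : r ≤ 1) : A r 0 = 1 - r := by
  have : ((0:ℝ):ℂ) * Complex.I = 0 := by simp
  rw [A, this, Complex.exp_zero, mul_one]
  rw [show (1 - (r:ℂ)) = (((1 - r : ℝ)):ℂ) by push_cast; ring]
  rw [Complex.norm_real, Real.norm_eq_abs, abs_of_nonneg (by linarith)]

lemma sup_nonempty (γ r : ℝ) :
    ((fun θ : ℝ => A r θ ^ (-γ)) '' Set.Icc 0 (2*π)).Nonempty :=
  ⟨_, Set.mem_image_of_mem _ (Set.mem_Icc.mpr ⟨le_refl 0, by positivity⟩)⟩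

lemma sup_bddAbove (γ r : ℝ) (hr : 0 ≤ r) (hr1 : r < 1) :
    BddAbove ((fun θ : ℝ => A r θ ^ (-γ)) '' Set.Icc 0 (2*π)) :=
  (isCompact_Icc.image (contApow r (-γ) hr hr1)).bddAbove

lemma le_sup (γ r : ℝ) (hr : 0 ≤ r) (hr1 : r < 1) :
    (1-r) ^ (-γ) ≤ intMean ⊤ (fun z : ℂ => (1 - z) ^ (-(γ:ℂ))) r := by
  rw [intMean_top]
  have h0 : (0:ℝ) ∈ Set.Icc (0:ℝ) (2*π) := Set.mem_Icc.mpr ⟨le_refl 0, by positivity⟩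
  have := le_csSup (sup_bddAbove γ r hr hr1) (Set.mem_image_of_mem _ h0)
  rwa [A_zero r hr1.le] at this

lemma sup_le (γ r B : ℝ) (hr : 0 ≤ r) (hr1 : r < 1)
    (hB : ∀ θ ∈ Set.Icc (0:ℝ) (2*π), A r θ ^ (-γ) ≤ B) :
    intMean ⊤ (fun z : ℂ => (1 - z) ^ (-(γ:ℂ))) r ≤ B := by
  rw [intMean_top]
  apply csSup_le (sup_nonempty γ r)
  rintro b ⟨θ, hθ, rfl⟩
  exact hB θ hθ

lemma I_le (r β : ℝ) (hr : 0 ≤ r) (hr1 : r < 1) (hβ : 0 ≤ β) :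
    ∫ θ in (0:ℝ)..(2*π), A r θ ^ (-β)
      ≤ 2 * (10^β * ∫ θ in (0:ℝ)..π, (1 - r + θ) ^ (-β)) := by
  rw [int_sym r (-β) hr hr1]
  have ha : (0:ℝ) < 1 - r := by linarith
  have h1 : ∫ θ in (0:ℝ)..π, A r θ ^ (-β)
      ≤ ∫ θ in (0:ℝ)..π, 10^β * (1 - r + θ) ^ (-β) := by
    apply integral_mono_on Real.pi_pos.le (intble r (-β) 0 π hr hr1)
      ((intble_shift (1-r) (-β) ha).const_mul _)
    intro θ hθ
    exact ptwise_bound r β θ hr hr1 hβ hθ.1 hθ.2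
  rw [intervalIntegral.integral_const_mul] at h1
  linarith

lemma analytic_F (γ : ℝ) :
    AnalyticOn ℂ (fun z : ℂ => (1 - z) ^ (-(γ:ℂ))) (Metric.ball 0 1) := by
  apply DifferentiableOn.analyticOn _ Metric.isOpen_ball
  intro z hz
  apply DifferentiableAt.differentiableWithinAt
  apply DifferentiableAt.cpow (by fun_prop) (differentiableAt_const _)
  rw [Complex.mem_slitPlane_iff]
  left
  simp only [Complex.sub_re, Complex.one_re]
  have h1 : ‖z‖ < 1 := by simpa [Complex.dist_eq] using (Metric.mem_ball.mp hz)
  have h2 := Complex.re_le_norm z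
  linarith

lemma mean_le (p : ℝ≥0∞) (hp0 : 0 < p) (hp : p ≠ ⊤) (γ r D m : ℝ)
    (hr : 0 ≤ r) (hr1 : r < 1) (hD : 0 ≤ D)
    (hI : ∫ θ in (0:ℝ)..(2*π), A r θ ^ (-(γ * p.toReal)) ≤ D * (1-r) ^ (-m)) :
    intMean p (fun z : ℂ => (1 - z) ^ (-(γ:ℂ))) r
      ≤ ((1/(2*π)) * D) ^ (1/p.toReal) * (1-r) ^ (-(m/p.toReal)) := by
  set t := p.toReal with htdef
  have ht : 0 < t := ENNReal.toReal_pos hp0.ne' hp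
  have ha : (0:ℝ) < 1 - r := by linarith
  have hπ : (0:ℝ) < π := Real.pi_pos
  have hInn : (0:ℝ) ≤ (1/(2*π)) * ∫ θ in (0:ℝ)..(2*π), A r θ ^ (-(γ * t)) := by
    apply mul_nonneg (by positivity)
    apply intervalIntegral.integral_nonneg (by positivity)
    intro x _; exact Real.rpow_nonneg (A_nonneg r x) _
  rw [intMean_fin p hp γ r]
  calc ((1/(2*π)) * ∫ θ in (0:ℝ)..(2*π), A r θ ^ (-(γ * t))) ^ (1/t)
      ≤ ((1/(2*π)) * (D * (1-r) ^ (-m))) ^ (1/t) := by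
        apply Real.rpow_le_rpow hInn _ (by positivity)
        apply mul_le_mul_of_nonneg_left hI (by positivity)
    _ = ((1/(2*π)) * D) ^ (1/t) * (1-r) ^ (-(m/t)) := by
        rw [← mul_assoc, Real.mul_rpow (by positivity) (Real.rpow_nonneg ha.le _)]
        congr 1
        rw [← Real.rpow_mul ha.le]
        congr 1
        field_simp

end PowHAux

namespace PowHAux
open Real Set intervalIntegral

lemma intMean_fin_nonneg (p : ℝ≥0∞) (hp : p ≠ ⊤) (γ r : ℝ) :
    0 ≤ intMean p (fun z : ℂ => (1 - z) ^ (-(γ:ℂ))) r := by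
  rw [intMean_fin p hp γ r]
  apply Real.rpow_nonneg
  apply mul_nonneg (by positivity)
  apply intervalIntegral.integral_nonneg (by positivity)
  intro x _; exact Real.rpow_nonneg (A_nonneg r x) _

lemma upper_fin (p : ℝ≥0∞) (hp0 : 0 < p) (hp : p ≠ ⊤) (α γ : ℝ) (hα : 0 < α)
    (hγ : γ * p.toReal ≤ α * p.toReal + 1) :
    ∃ C : ℝ, ∀ r ∈ Set.Ico (0:ℝ) 1,
      (1-r)^α * intMean p (fun z : ℂ => (1 - z) ^ (-(γ:ℂ))) r ≤ C := by
  have ht : 0 < p.toReal := ENNReal.toReal_pos hp0.ne' hp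
  set t := p.toReal with htdef
  set β := γ * t with hβdef
  have hπ : (0:ℝ) < π := Real.pi_pos
  rcases le_or_gt γ 0 with hγ0 | hγ0
  · -- γ ≤ 0 : integrand bounded by 2^(-β)
    refine ⟨((1/(2*π)) * (2*π*2^(-β)))^(1/t), ?_⟩
    rintro r ⟨hr0, hr1⟩
    have hβ0 : β ≤ 0 := mul_nonpos_of_nonpos_of_nonneg hγ0 ht.le
    have hI : ∫ θ in (0:ℝ)..(2*π), A r θ ^ (-β) ≤ (2*π*2^(-β)) * (1-r) ^ (-(0:ℝ)) := by
      rw [neg_zero, Real.rpow_zero, mul_one]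
      have h1 : ∫ θ in (0:ℝ)..(2*π), A r θ ^ (-β)
          ≤ ∫ _θ in (0:ℝ)..(2*π), (2:ℝ)^(-β) := by
        apply integral_mono_on (by positivity) (intble r (-β) _ _ hr0 hr1)
          intervalIntegrable_const
        intro θ _
        exact Real.rpow_le_rpow (A_nonneg r θ) (A_le_two r θ hr0 hr1.le) (by linarith)
      rwa [intervalIntegral.integral_const, smul_eq_mul, sub_zero] at h1
    have hml := mean_le p hp0 hp γ r (2*π*2^(-β)) 0 hr0 hr1 (by positivity) hI
    rw [zero_div, neg_zero, Real.rpow_zero, mul_one] at hml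
    calc (1-r)^α * intMean p (fun z : ℂ => (1 - z) ^ (-(γ:ℂ))) r
        ≤ 1 * (((1/(2*π)) * (2*π*2^(-β)))^(1/t)) := by
          apply mul_le_mul (Real.rpow_le_one (by linarith) (by linarith) hα.le) hml
            (intMean_fin_nonneg p hp γ r) zero_le_one
      _ = _ := one_mul _
  · rcases le_or_gt β 1 with hβ1 | hβ1
    · -- 0 < β ≤ 1
      set m := min (α*t) (β/2) with hmdef
      have hβ0 : 0 < β := mul_pos hγ0 ht
      have hm0 : 0 < m := lt_min (by positivity) (by positivity)
      have hmαt : m ≤ α*t := min_le_left _ _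
      set d := β - m with hddef
      have hd0 : 0 ≤ d := by
        have := min_le_right (α*t) (β/2)
        rw [hddef]; linarith [hmdef ▸ this]
      have hd1 : d < 1 := by rw [hddef]; linarith
      have hE : (0:ℝ) ≤ (1+π)/(1-d) := div_nonneg (by linarith) (by linarith)
      have hD : (0:ℝ) ≤ (1/(2*π)) * (2*(10^β*((1+π)/(1-d)))) := by
        apply mul_nonneg (by positivity)
        apply mul_nonneg (by norm_num)
        exact mul_nonneg (Real.rpow_nonneg (by norm_num) _) hE
      refine ⟨((1/(2*π)) * (2*(10^β*((1+π)/(1-d)))))^(1/t), ?_⟩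
      rintro r ⟨hr0, hr1⟩
      have ha : (0:ℝ) < 1 - r := by linarith
      have hInt : ∫ θ in (0:ℝ)..π, (1 - r + θ) ^ (-β)
          ≤ (1-r)^(-m) * ((1+π)/(1-d)) := by
        have h1 : ∫ θ in (0:ℝ)..π, (1 - r + θ) ^ (-β)
            ≤ ∫ θ in (0:ℝ)..π, (1-r)^(-m) * (1 - r + θ) ^ (-d) := by
          apply integral_mono_on hπ.le (intble_shift (1-r) (-β) ha)
            ((intble_shift (1-r) (-d) ha).const_mul _)
          intro θ hθ
          have := split_pt (1-r) θ m β ha hθ.1 hm0.le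
          rwa [← hddef] at this
        rw [intervalIntegral.integral_const_mul] at h1
        refine h1.trans ?_
        apply mul_le_mul_of_nonneg_left _ (Real.rpow_nonneg ha.le _)
        exact int_rpow_le_of_lt_one (1-r) d ha (by linarith) hd0 hd1
      have hI : ∫ θ in (0:ℝ)..(2*π), A r θ ^ (-β)
          ≤ (2*(10^β*((1+π)/(1-d)))) * (1-r) ^ (-m) := by
        refine (I_le r β hr0 hr1 hβ0.le).trans ?_
        calc 2 * (10^β * ∫ θ in (0:ℝ)..π, (1 - r + θ) ^ (-β))
            ≤ 2 * (10^β * ((1-r)^(-m) * ((1+π)/(1-d)))) := by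
              apply mul_le_mul_of_nonneg_left _ (by norm_num)
              exact mul_le_mul_of_nonneg_left hInt (by positivity)
          _ = (2*(10^β*((1+π)/(1-d)))) * (1-r) ^ (-m) := by ring
      have hml := mean_le p hp0 hp γ r _ m hr0 hr1 (by
        apply mul_nonneg (by norm_num)
        exact mul_nonneg (Real.rpow_nonneg (by norm_num) _) hE) hI
      calc (1-r)^α * intMean p (fun z : ℂ => (1 - z) ^ (-(γ:ℂ))) r
          ≤ (1-r)^α * (((1/(2*π)) * (2*(10^β*((1+π)/(1-d)))))^(1/t) * (1-r) ^ (-(m/t))) :=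
            mul_le_mul_of_nonneg_left hml (Real.rpow_nonneg ha.le _)
        _ = ((1/(2*π)) * (2*(10^β*((1+π)/(1-d)))))^(1/t) * (1-r)^(α + -(m/t)) := by
            rw [Real.rpow_add ha]; ring
        _ ≤ ((1/(2*π)) * (2*(10^β*((1+π)/(1-d)))))^(1/t) * 1 := by
            apply mul_le_mul_of_nonneg_left _ (Real.rpow_nonneg hD _)
            apply Real.rpow_le_one ha.le (by linarith)
            have : m/t ≤ α := by rw [div_le_iff₀ ht]; linarith
            linarith
        _ = _ := mul_one _
    · -- β > 1
      set m := β - 1 with hmdef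
      have hm0 : 0 < m := by rw [hmdef]; linarith
      refine ⟨((1/(2*π)) * (2*(10^β*(1/(β-1)))))^(1/t), ?_⟩
      rintro r ⟨hr0, hr1⟩
      have ha : (0:ℝ) < 1 - r := by linarith
      have hI : ∫ θ in (0:ℝ)..(2*π), A r θ ^ (-β)
          ≤ (2*(10^β*(1/(β-1)))) * (1-r) ^ (-m) := by
        refine (I_le r β hr0 hr1 (by linarith)).trans ?_
        have h2 : ∫ θ in (0:ℝ)..π, (1 - r + θ) ^ (-β) ≤ (1-r)^(-m) * (1/(β-1)) := by
          have := int_rpow_le_of_gt_one (1-r) β ha hβ1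
          rwa [show (1-β) = -m by rw [hmdef]; ring, div_eq_mul_one_div] at this
        calc 2 * (10^β * ∫ θ in (0:ℝ)..π, (1 - r + θ) ^ (-β))
            ≤ 2 * (10^β * ((1-r)^(-m) * (1/(β-1)))) := by
              apply mul_le_mul_of_nonneg_left _ (by norm_num)
              exact mul_le_mul_of_nonneg_left h2 (by positivity)
          _ = (2*(10^β*(1/(β-1)))) * (1-r) ^ (-m) := by ring
      have hml := mean_le p hp0 hp γ r _ m hr0 hr1 (by positivity) hI
      calc (1-r)^α * intMean p (fun z : ℂ => (1 - z) ^ (-(γ:ℂ))) r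
          ≤ (1-r)^α * (((1/(2*π)) * (2*(10^β*(1/(β-1)))))^(1/t) * (1-r) ^ (-(m/t))) :=
            mul_le_mul_of_nonneg_left hml (Real.rpow_nonneg ha.le _)
        _ = ((1/(2*π)) * (2*(10^β*(1/(β-1)))))^(1/t) * (1-r)^(α + -(m/t)) := by
            rw [Real.rpow_add ha]; ring
        _ ≤ ((1/(2*π)) * (2*(10^β*(1/(β-1)))))^(1/t) * 1 := by
            apply mul_le_mul_of_nonneg_left _ (by positivity)
            apply Real.rpow_le_one ha.le (by linarith)
            have : m/t ≤ α := by rw [div_le_iff₀ ht]; rw [hmdef]; linarith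
            linarith
        _ = _ := mul_one _

lemma lower_fin (p : ℝ≥0∞) (hp0 : 0 < p) (hp : p ≠ ⊤) (γ : ℝ) (hγ0 : 0 < γ)
    (r : ℝ) (hr0 : 0 ≤ r) (hr1 : r < 1) :
    (2^(-(γ*p.toReal))/(2*π))^(1/p.toReal) * (1-r)^((1-γ*p.toReal)/p.toReal)
      ≤ intMean p (fun z : ℂ => (1 - z) ^ (-(γ:ℂ))) r := by
  have ht : 0 < p.toReal := ENNReal.toReal_pos hp0.ne' hp
  set t := p.toReal with htdef
  set β := γ * t with hβdef
  have hβ0 : 0 < β := mul_pos hγ0 ht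
  have ha : (0:ℝ) < 1 - r := by linarith
  have hπ : (0:ℝ) < π := Real.pi_pos
  have h1 : (1-r) * (2*(1-r))^(-β) ≤ ∫ θ in (0:ℝ)..(2*π), A r θ ^ (-β) := by
    have hi2 : ∫ _θ in (0:ℝ)..(1-r), (2*(1-r))^(-β)
        ≤ ∫ θ in (0:ℝ)..(1-r), A r θ ^ (-β) := by
      apply integral_mono_on ha.le intervalIntegrable_const (intble r (-β) _ _ hr0 hr1)
      intro θ hθ
      exact Real.rpow_le_rpow_of_nonpos (A_pos r θ hr0 hr1)
        (A_le_small r θ hr0 hr1.le hθ.1 hθ.2) (by linarith)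
    rw [intervalIntegral.integral_const, smul_eq_mul, sub_zero] at hi2
    have hi3 := integral_add_adjacent_intervals (a := (0:ℝ)) (b := 1-r) (c := 2*π)
      (intble r (-β) _ _ hr0 hr1) (intble r (-β) _ _ hr0 hr1)
    have hi4 : (0:ℝ) ≤ ∫ θ in (1-r)..(2*π), A r θ ^ (-β) := by
      apply intervalIntegral.integral_nonneg (by nlinarith [Real.pi_gt_three])
      intro x _; exact Real.rpow_nonneg (A_nonneg r x) _
    linarith
  have h2 : (2^(-β)/(2*π)) * (1-r)^(1-β)
      ≤ (1/(2*π)) * ∫ θ in (0:ℝ)..(2*π), A r θ ^ (-β) := by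
    have heq : (2^(-β)/(2*π)) * (1-r)^(1-β) = (1/(2*π)) * ((1-r) * (2*(1-r))^(-β)) := by
      rw [Real.mul_rpow (by norm_num) ha.le]
      rw [show (1:ℝ)-β = 1 + -β by ring, Real.rpow_add ha, Real.rpow_one]
      ring
    rw [heq]
    exact mul_le_mul_of_nonneg_left h1 (by positivity)
  rw [intMean_fin p hp γ r]
  calc (2^(-β)/(2*π))^(1/t) * (1-r)^((1-β)/t)
      = ((2^(-β)/(2*π)) * (1-r)^(1-β))^(1/t) := by
        rw [Real.mul_rpow (by positivity) (Real.rpow_nonneg ha.le _),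
          ← Real.rpow_mul ha.le, mul_one_div]
    _ ≤ _ := Real.rpow_le_rpow (by positivity) h2 (by positivity)

end PowHAux

/-- Lemma A, case `q = ∞`: `(1-z)^{-γ} ∈ H(p,∞,α)` iff `γ ≤ α + 1/p`. -/
theorem powFun_mem_Hinf_iff (p : ℝ≥0∞) (α γ : ℝ) (hp : 0 < p) (hα : 0 < α) :
    MemH p ⊤ α (fun z : ℂ => (1 - z) ^ (-(γ : ℂ))) ↔ γ ≤ α + p⁻¹.toReal := by
  constructor
  · intro h
    unfold MemH at h
    rw [if_pos rfl] at h
    obtain ⟨-, hbdd⟩ := h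
    obtain ⟨K, hK⟩ := hbdd
    by_contra hcon
    push_neg at hcon
    have htr0 : (0:ℝ) ≤ p⁻¹.toReal := ENNReal.toReal_nonneg
    have hγ0 : 0 < γ := by linarith
    by_cases hpt : p = ⊤
    · subst hpt
      rw [ENNReal.inv_top, ENNReal.toReal_zero, add_zero] at hcon
      refine PowHAux.no_bound (e := α + -γ) (c := 1) (K := K) (by linarith) one_pos ?_
      intro x hx0 hx1
      have hr : 1 - x ∈ Set.Ico (0:ℝ) 1 := ⟨by linarith, by linarith⟩
      have hv : (1-(1-x))^α * intMean ⊤ (fun z : ℂ => (1 - z) ^ (-(γ:ℂ))) (1-x) ≤ K :=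
        hK (Set.mem_image_of_mem _ hr)
      rw [show (1:ℝ)-(1-x) = x by ring] at hv
      have hsup := PowHAux.le_sup γ (1-x) hr.1 hr.2
      rw [show (1:ℝ)-(1-x) = x by ring] at hsup
      have h2 : x^α * x^(-γ) ≤ x^α * intMean ⊤ (fun z : ℂ => (1 - z) ^ (-(γ:ℂ))) (1-x) :=
        mul_le_mul_of_nonneg_left hsup (Real.rpow_nonneg hx0.le _)
      rw [← Real.rpow_add hx0] at h2
      rw [one_mul]
      linarith
    · have ht : 0 < p.toReal := ENNReal.toReal_pos hp.ne' hpt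
      rw [ENNReal.toReal_inv] at hcon
      set t := p.toReal with htdef
      set c := (2^(-(γ*t))/(2*π))^(1/t) with hcdef
      have hc0 : 0 < c := Real.rpow_pos_of_pos (by positivity) _
      refine PowHAux.no_bound (e := α + (1-γ*t)/t) (c := c) (K := K) ?_ hc0 ?_
      · have hne : (1-γ*t)/t = t⁻¹ - γ := by field_simp
        rw [hne]; linarith
      · intro x hx0 hx1
        have hr : 1 - x ∈ Set.Ico (0:ℝ) 1 := ⟨by linarith, by linarith⟩
        have hv : (1-(1-x))^α * intMean p (fun z : ℂ => (1 - z) ^ (-(γ:ℂ))) (1-x) ≤ K :=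
          hK (Set.mem_image_of_mem _ hr)
        rw [show (1:ℝ)-(1-x) = x by ring] at hv
        have hlow := PowHAux.lower_fin p hp hpt γ hγ0 (1-x) hr.1 hr.2
        rw [show (1:ℝ)-(1-x) = x by ring] at hlow
        have heq : c * x^(α + (1-γ*t)/t) = x^α * (c * x^((1-γ*t)/t)) := by
          rw [Real.rpow_add hx0]; ring
        rw [heq]
        calc x^α * (c * x^((1-γ*t)/t))
            ≤ x^α * intMean p (fun z : ℂ => (1 - z) ^ (-(γ:ℂ))) (1-x) :=
              mul_le_mul_of_nonneg_left hlow (Real.rpow_nonneg hx0.le _)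
          _ ≤ K := hv
  · intro hγ
    unfold MemH
    rw [if_pos rfl]
    refine ⟨PowHAux.analytic_F γ, ?_⟩
    by_cases hpt : p = ⊤
    · subst hpt
      rw [ENNReal.inv_top, ENNReal.toReal_zero, add_zero] at hγ
      refine ⟨max 1 (2^(-γ)), ?_⟩
      rintro y ⟨r, ⟨hr0, hr1⟩, rfl⟩
      show (1-r)^α * intMean ⊤ (fun z : ℂ => (1 - z) ^ (-(γ:ℂ))) r ≤ max 1 (2^(-γ))
      have ha : (0:ℝ) < 1 - r := by linarith
      have hmean0 : (0:ℝ) ≤ intMean ⊤ (fun z : ℂ => (1 - z) ^ (-(γ:ℂ))) r :=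
        le_trans (Real.rpow_nonneg ha.le _) (PowHAux.le_sup γ r hr0 hr1)
      rcases le_or_gt γ 0 with hγ0 | hγ0
      · have hsup : intMean ⊤ (fun z : ℂ => (1 - z) ^ (-(γ:ℂ))) r ≤ 2^(-γ) :=
          PowHAux.sup_le γ r _ hr0 hr1 (fun θ _ =>
            Real.rpow_le_rpow (PowHAux.A_nonneg r θ) (PowHAux.A_le_two r θ hr0 hr1.le)
              (by linarith))
        calc (1-r)^α * intMean ⊤ (fun z : ℂ => (1 - z) ^ (-(γ:ℂ))) r
            ≤ 1 * 2^(-γ) := mul_le_mul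
              (Real.rpow_le_one ha.le (by linarith) hα.le) hsup hmean0 zero_le_one
          _ = 2^(-γ) := one_mul _
          _ ≤ max 1 (2^(-γ)) := le_max_right _ _
      · have hsup : intMean ⊤ (fun z : ℂ => (1 - z) ^ (-(γ:ℂ))) r ≤ (1-r)^(-γ) :=
          PowHAux.sup_le γ r _ hr0 hr1 (fun θ _ =>
            Real.rpow_le_rpow_of_nonpos ha (PowHAux.A_ge r θ hr0) (by linarith))
        calc (1-r)^α * intMean ⊤ (fun z : ℂ => (1 - z) ^ (-(γ:ℂ))) r
            ≤ (1-r)^α * (1-r)^(-γ) :=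
              mul_le_mul_of_nonneg_left hsup (Real.rpow_nonneg ha.le _)
          _ = (1-r)^(α + -γ) := (Real.rpow_add ha _ _).symm
          _ ≤ 1 := Real.rpow_le_one ha.le (by linarith) (by linarith)
          _ ≤ max 1 (2^(-γ)) := le_max_left _ _
    · have ht : 0 < p.toReal := ENNReal.toReal_pos hp.ne' hpt
      rw [ENNReal.toReal_inv] at hγ
      have hγ' : γ * p.toReal ≤ α * p.toReal + 1 := by
        have h1 := mul_le_mul_of_nonneg_right hγ ht.le
        have h2 : (α + (p.toReal)⁻¹) * p.toReal = α * p.toReal + 1 := by field_simp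
        linarith
      obtain ⟨C, hC⟩ := PowHAux.upper_fin p hp hpt α γ hα hγ'
      refine ⟨C, ?_⟩
      rintro y ⟨r, hr, rfl⟩
      exact hC r hr
end

section
/- Let 0 < p ≤ ∞, 0 < q < ∞, 0 < α < ∞, and let c ∈ ℝ. The function f(z) = (1-z)^{-(α+1/p)} (log(e/(1-z)))^{-c} belongs to H(p,q,α) if and only if c > 1/q. -/
open MeasureTheory Real Set Filter ENNReal

set_option maxHeartbeats 1000000

noncomputable section


/-- `Lg x = log (e / x) = 1 - log x` for `x > 0`. -/
def Lg (x : ℝ) : ℝ := 1 - Real.log x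

lemma Lg_ge_of_le_two {x : ℝ} (hx0 : 0 ≤ x) (hx2 : x ≤ 2) : 1 - Real.log 2 ≤ Lg x := by
  unfold Lg
  rcases eq_or_lt_of_le hx0 with h | h
  · rw [← h, Real.log_zero]
    nlinarith [Real.log_nonneg (by norm_num : (1:ℝ) ≤ 2)]
  · have := Real.log_le_log h hx2
    linarith

lemma one_sub_log_two_pos : (0:ℝ) < 1 - Real.log 2 := by
  nlinarith [Real.log_two_lt_d9]

lemma Lg_pos {x : ℝ} (hx0 : 0 ≤ x) (hx2 : x ≤ 2) : 0 < Lg x :=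
  lt_of_lt_of_le one_sub_log_two_pos (Lg_ge_of_le_two hx0 hx2)

lemma Lg_anti {x y : ℝ} (hx : 0 < x) (hxy : x ≤ y) : Lg y ≤ Lg x := by
  have := Real.log_le_log hx hxy; unfold Lg; linarith

lemma Lg_one_le {x : ℝ} (hx0 : 0 ≤ x) (hx : x ≤ 1) : 1 ≤ Lg x := by
  unfold Lg
  rcases eq_or_lt_of_le hx0 with h | h
  · rw [← h, Real.log_zero]; norm_num
  · have := Real.log_nonpos h.le hx; linarith

/-- Core quasi-monotonicity lemma: `t ↦ t^(-ε) Lg(t)^(-μ)` is decreasing up to a constant. -/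
lemma core_lemma {ε μ : ℝ} (hε : 0 < ε) (hμ : 0 ≤ μ) :
    ∃ C : ℝ, 0 < C ∧ ∀ a t : ℝ, 0 < a → a ≤ t → t ≤ 2 →
      t ^ (-ε) * Lg t ^ (-μ) ≤ C * (a ^ (-ε) * Lg a ^ (-μ)) := by
  set δ : ℝ := ε / (μ + 1) with hδ
  have hδpos : 0 < δ := by positivity
  set K : ℝ := 1 / (δ * (1 - Real.log 2)) with hK
  have hKpos : 0 < K := by
    have := one_sub_log_two_pos; positivity
  refine ⟨(1 + K) ^ μ, by positivity, fun a t ha hat ht2 => ?_⟩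
  have ht : 0 < t := lt_of_lt_of_le ha hat
  have ha2 : a ≤ 2 := le_trans hat ht2
  have hLt : 0 < Lg t := Lg_pos ht.le ht2
  have hLa : 0 < Lg a := Lg_pos ha.le ha2
  set s : ℝ := t / a with hs
  have hs1 : 1 ≤ s := (one_le_div ha).2 hat
  have hspos : 0 < s := lt_of_lt_of_le one_pos hs1
  -- key : Lg a ≤ Lg t * (1 + K * s ^ δ)
  have hsδ1 : 1 ≤ s ^ δ := Real.one_le_rpow hs1 hδpos.le
  have hlog : Real.log s ≤ s ^ δ / δ := Real.log_le_rpow_div hspos.le hδpos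
  have hLgsplit : Lg a = Lg t + Real.log s := by
    unfold Lg
    rw [hs, Real.log_div (ne_of_gt ht) (ne_of_gt ha)]
    ring
  have hLtge : 1 - Real.log 2 ≤ Lg t := Lg_ge_of_le_two ht.le ht2
  have key : Lg a ≤ Lg t * (1 + K * s ^ δ) := by
    have h1 : Real.log s ≤ Lg t * (K * s ^ δ) := by
      have : Real.log s ≤ (1 - Real.log 2) * (K * s ^ δ) := by
        rw [hK]
        have h2 : (1 - Real.log 2) * (1 / (δ * (1 - Real.log 2)) * s ^ δ) = s ^ δ / δ := by
          have h3 := hδpos.ne'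
          have h4 := one_sub_log_two_pos.ne'
          field_simp
        rw [h2]; exact hlog
      refine le_trans this ?_
      have : 0 ≤ K * s ^ δ := by positivity
      nlinarith
    nlinarith
  -- now conclude
  have hmain : a ^ ε * Lg a ^ μ * (t ^ (-ε) * Lg t ^ (-μ)) ≤ (1 + K) ^ μ := by
    have e1 : Lg a ^ μ ≤ Lg t ^ μ * ((1 + K) ^ μ * s ^ (δ * μ)) := by
      calc Lg a ^ μ ≤ (Lg t * (1 + K * s ^ δ)) ^ μ :=
            Real.rpow_le_rpow hLa.le key hμ
        _ ≤ (Lg t * ((1 + K) * s ^ δ)) ^ μ := by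
            apply Real.rpow_le_rpow (by positivity) _ hμ
            have : 1 + K * s ^ δ ≤ (1 + K) * s ^ δ := by nlinarith
            nlinarith
        _ = Lg t ^ μ * ((1 + K) ^ μ * (s ^ δ) ^ μ) := by
            rw [Real.mul_rpow hLt.le (by positivity), Real.mul_rpow (by positivity) (by positivity)]
        _ = Lg t ^ μ * ((1 + K) ^ μ * s ^ (δ * μ)) := by
            rw [Real.rpow_mul hspos.le δ μ]
    have e2 : a ^ ε = t ^ ε * s ^ (-ε) := by
      rw [hs, Real.rpow_neg (by positivity), Real.div_rpow ht.le ha.le, inv_div]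
      have h5 := (Real.rpow_pos_of_pos ht ε).ne'
      field_simp
    have e3 : s ^ (δ * μ) * s ^ (-ε) ≤ 1 := by
      rw [← Real.rpow_add hspos]
      apply Real.rpow_le_one_of_one_le_of_nonpos hs1
      have : δ * μ ≤ ε := by
        rw [hδ]
        rw [div_mul_eq_mul_div, div_le_iff₀ (by positivity)]
        nlinarith
      linarith
    calc a ^ ε * Lg a ^ μ * (t ^ (-ε) * Lg t ^ (-μ))
        ≤ (t ^ ε * s ^ (-ε)) * (Lg t ^ μ * ((1 + K) ^ μ * s ^ (δ * μ))) * (t ^ (-ε) * Lg t ^ (-μ)) := by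
          rw [← e2]
          apply mul_le_mul_of_nonneg_right _ (by positivity)
          apply mul_le_mul_of_nonneg_left e1 (by positivity)
      _ = (1 + K) ^ μ * (s ^ (δ * μ) * s ^ (-ε)) * (t ^ ε * t ^ (-ε)) * (Lg t ^ μ * Lg t ^ (-μ)) := by
          ring
      _ ≤ (1 + K) ^ μ * 1 * 1 * 1 := by
          rw [← Real.rpow_add ht, ← Real.rpow_add hLt]
          simp only [add_neg_cancel, Real.rpow_zero, mul_one]
          have hC : (0:ℝ) ≤ (1 + K) ^ μ := by positivity
          nlinarith
      _ = (1 + K) ^ μ := by ring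
  -- divide
  have hinv : a ^ (-ε) * Lg a ^ (-μ) = (a ^ ε * Lg a ^ μ)⁻¹ := by
    rw [Real.rpow_neg ha.le, Real.rpow_neg hLa.le, mul_inv]
  have hpos : 0 < a ^ ε * Lg a ^ μ := by positivity
  rw [hinv, ← div_eq_mul_inv, le_div_iff₀ hpos, mul_comm]
  exact hmain



def Ffun (lam c : ℝ) : ℂ → ℂ := fun z =>
  (1 - z) ^ (-(lam : ℂ)) * Complex.log (Complex.exp 1 / (1 - z)) ^ (-(c : ℂ))

def K₁ : ℝ := 1 + π / (1 - Real.log 2)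

lemma K₁_pos : 0 < K₁ := by
  have := one_sub_log_two_pos
  have := Real.pi_pos
  unfold K₁; positivity

lemma one_le_K₁ : 1 ≤ K₁ := by
  have := one_sub_log_two_pos
  have := Real.pi_pos
  unfold K₁; nlinarith [div_pos Real.pi_pos one_sub_log_two_pos]

section PointFacts
variable {z : ℂ}

lemma re_one_sub_pos (hz : ‖z‖ < 1) : 0 < (1 - z).re := by
  have h1 : z.re ≤ ‖z‖ := (abs_le.mp (Complex.abs_re_le_norm z)).2
  simp only [Complex.sub_re, Complex.one_re]
  linarith

lemma one_sub_ne (hz : ‖z‖ < 1) : (1 : ℂ) - z ≠ 0 := by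
  intro h
  have := re_one_sub_pos hz
  rw [h] at this
  simp at this

lemma abs_one_sub_lt_two (hz : ‖z‖ < 1) : ‖1 - z‖ < 2 := by
  calc ‖1 - z‖ ≤ ‖(1:ℂ)‖ + ‖z‖ := norm_sub_le 1 z
    _ < 2 := by rw [norm_one]; linarith

lemma abs_one_sub_pos (hz : ‖z‖ < 1) : 0 < ‖1 - z‖ :=
  norm_pos_iff.mpr (one_sub_ne hz)

lemma exp_one_div_re_pos (hz : ‖z‖ < 1) : 0 < (Complex.exp 1 / (1 - z)).re := by
  rw [Complex.div_re]
  have h1 : Complex.exp 1 = ((Real.exp 1 : ℝ) : ℂ) := by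
    rw [Complex.ofReal_exp]; norm_num
  rw [h1]
  simp only [Complex.ofReal_re, Complex.ofReal_im, zero_mul, zero_div, add_zero]
  have h2 : 0 < Complex.normSq (1 - z) := Complex.normSq_pos.2 (one_sub_ne hz)
  have h3 : 0 < Real.exp 1 := Real.exp_pos 1
  have h4 := re_one_sub_pos hz
  positivity

lemma exp_one_div_ne (hz : ‖z‖ < 1) : Complex.exp 1 / (1 - z) ≠ 0 := by
  intro h
  have := exp_one_div_re_pos hz
  rw [h] at this; simp at this

lemma log_exp_div_re (hz : ‖z‖ < 1) : (Complex.log (Complex.exp 1 / (1 - z))).re = Lg (‖1 - z‖) := by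
  rw [Complex.log_re, norm_div, Complex.norm_exp]
  simp only [Complex.one_re]
  rw [Real.log_div (by positivity) (abs_one_sub_pos hz).ne', Real.log_exp]
  rfl

lemma log_exp_div_ne (hz : ‖z‖ < 1) : Complex.log (Complex.exp 1 / (1 - z)) ≠ 0 := by
  intro h
  have h2 := log_exp_div_re hz
  rw [h] at h2
  have := Lg_pos (norm_nonneg (1 - z)) (abs_one_sub_lt_two hz).le
  rw [← h2] at this
  simp at this

lemma abs_log_ge (hz : ‖z‖ < 1) : Lg (‖1 - z‖) ≤ ‖Complex.log (Complex.exp 1 / (1 - z))‖ := by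
  rw [← log_exp_div_re hz]
  exact (le_abs_self _).trans (Complex.abs_re_le_norm _)

lemma abs_log_le (hz : ‖z‖ < 1) : ‖Complex.log (Complex.exp 1 / (1 - z))‖ ≤ K₁ * Lg (‖1 - z‖) := by
  have h1 := Complex.norm_le_abs_re_add_abs_im (Complex.log (Complex.exp 1 / (1 - z)))
  have h2 : |(Complex.log (Complex.exp 1 / (1 - z))).re| = Lg (‖1 - z‖) := by
    rw [log_exp_div_re hz]
    exact abs_of_pos (Lg_pos (norm_nonneg _) (abs_one_sub_lt_two hz).le)
  have h3 : |(Complex.log (Complex.exp 1 / (1 - z))).im| ≤ π := by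
    rw [Complex.log_im]; exact Complex.abs_arg_le_pi _
  have h4 : 1 - Real.log 2 ≤ Lg (‖1 - z‖) :=
    Lg_ge_of_le_two (norm_nonneg _) (abs_one_sub_lt_two hz).le
  have h5 := one_sub_log_two_pos
  have h6 : π ≤ (π / (1 - Real.log 2)) * Lg (‖1 - z‖) := by
    rw [div_mul_eq_mul_div, le_div_iff₀ h5]
    nlinarith [Real.pi_pos]
  unfold K₁
  nlinarith [Real.pi_pos]

lemma abs_Ffun (hz : ‖z‖ < 1) (lam c : ℝ) :
    ‖Ffun lam c z‖ =
      ‖1 - z‖ ^ (-lam) *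
        ‖Complex.log (Complex.exp 1 / (1 - z))‖ ^ (-c) := by
  unfold Ffun
  rw [norm_mul]
  rw [show -(lam : ℂ) = ((-lam : ℝ) : ℂ) by push_cast; ring]
  rw [show -(c : ℂ) = ((-c : ℝ) : ℂ) by push_cast; ring]
  rw [Complex.norm_cpow_real, Complex.norm_cpow_real]

lemma abs_Ffun_pos (hz : ‖z‖ < 1) (lam c : ℝ) : 0 < ‖Ffun lam c z‖ := by
  rw [abs_Ffun hz]
  have h1 := abs_one_sub_pos hz
  have h2 : 0 < ‖Complex.log (Complex.exp 1 / (1 - z))‖ :=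
    norm_pos_iff.mpr (log_exp_div_ne hz)
  positivity

end PointFacts

lemma Ffun_differentiableOn (lam c : ℝ) :
    DifferentiableOn ℂ (Ffun lam c) (Metric.ball 0 1) := by
  intro z hz
  have hz' : ‖z‖ < 1 := by
    simpa using Metric.mem_ball.mp hz
  apply DifferentiableAt.differentiableWithinAt
  have hd1 : DifferentiableAt ℂ (fun z : ℂ => 1 - z) z :=
    (differentiable_const (1:ℂ)).differentiableAt.sub differentiable_id.differentiableAt
  have hslit1 : (1 : ℂ) - z ∈ Complex.slitPlane := Or.inl (re_one_sub_pos hz')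
  have hd2 : DifferentiableAt ℂ (fun z : ℂ => (1 - z) ^ (-(lam : ℂ))) z :=
    hd1.cpow (differentiableAt_const _) hslit1
  have hd3 : DifferentiableAt ℂ (fun z : ℂ => Complex.exp 1 / (1 - z)) z :=
    (differentiableAt_const _).div hd1 (one_sub_ne hz')
  have hslit2 : Complex.exp 1 / (1 - z) ∈ Complex.slitPlane := Or.inl (exp_one_div_re_pos hz')
  have hd4 : DifferentiableAt ℂ (fun z : ℂ => Complex.log (Complex.exp 1 / (1 - z))) z :=
    hd3.clog hslit2
  have hslit3 : Complex.log (Complex.exp 1 / (1 - z)) ∈ Complex.slitPlane := by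
    left
    rw [log_exp_div_re hz']
    exact Lg_pos (norm_nonneg _) (abs_one_sub_lt_two hz').le
  exact hd2.mul (hd4.cpow (differentiableAt_const _) hslit3)

lemma Ffun_analyticOn (lam c : ℝ) : AnalyticOn ℂ (Ffun lam c) (Metric.ball 0 1) :=
  (Ffun_differentiableOn lam c).analyticOn Metric.isOpen_ball



lemma abs_circle {r : ℝ} (hr : 0 ≤ r) (θ : ℝ) :
    ‖(r : ℂ) * Complex.exp (θ * Complex.I)‖ = r := by
  rw [norm_mul, Complex.norm_exp]
  simp [Complex.norm_real, Real.norm_eq_abs, abs_of_nonneg hr]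

lemma circle_re_im (r θ : ℝ) :
    ((1 : ℂ) - (r : ℂ) * Complex.exp (θ * Complex.I)).re = 1 - r * Real.cos θ ∧
    ((1 : ℂ) - (r : ℂ) * Complex.exp (θ * Complex.I)).im = -(r * Real.sin θ) := by
  rw [Complex.exp_mul_I]
  constructor <;> simp [Complex.cos_ofReal_re, Complex.sin_ofReal_re, Complex.mul_re,
    Complex.mul_im, Complex.cos_ofReal_im, Complex.sin_ofReal_im]

lemma abs_one_sub_circle_sq (r θ : ℝ) :
    ‖1 - (r : ℂ) * Complex.exp (θ * Complex.I)‖ ^ (2:ℕ) =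
      (1 - r) ^ 2 + 2 * r * (1 - Real.cos θ) := by
  rw [Complex.sq_norm, Complex.normSq_apply, (circle_re_im r θ).1, (circle_re_im r θ).2]
  linear_combination (r:ℝ)^2 * Real.sin_sq_add_cos_sq θ

/-- lower bound `1 - r ≤ |1 - r e^{iθ}|` -/
lemma abs_one_sub_circle_ge (r θ : ℝ) (hr : 0 ≤ r) (hr1 : r ≤ 1) :
    1 - r ≤ ‖1 - (r : ℂ) * Complex.exp (θ * Complex.I)‖ := by
  have := abs_one_sub_circle_sq r θ
  nlinarith [norm_nonneg (1 - (r : ℂ) * Complex.exp (θ * Complex.I)),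
    Real.neg_one_le_cos θ, Real.cos_le_one θ]

/-- upper bound `|1 - r e^{iθ}| ≤ 2` for `0 ≤ r ≤ 1` -/
lemma abs_one_sub_circle_le_two {r : ℝ} (hr : 0 ≤ r) (hr1 : r ≤ 1) (θ : ℝ) :
    ‖1 - (r : ℂ) * Complex.exp (θ * Complex.I)‖ ≤ 2 := by
  calc ‖1 - (r : ℂ) * Complex.exp (θ * Complex.I)‖
      ≤ ‖(1:ℂ)‖ + ‖(r : ℂ) * Complex.exp (θ * Complex.I)‖ :=
        norm_sub_le _ _
    _ ≤ 2 := by rw [norm_one, abs_circle hr]; linarith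

/-- near `θ = 0`: `|1 - r e^{iθ}| ≤ (1-r) + 2θ` for `0 ≤ θ ≤ 1`. -/
lemma abs_one_sub_circle_near {r : ℝ} (hr : 0 ≤ r) (hr1 : r ≤ 1) {θ : ℝ}
    (hθ0 : 0 ≤ θ) (hθ1 : θ ≤ 1) :
    ‖1 - (r : ℂ) * Complex.exp (θ * Complex.I)‖ ≤ (1 - r) + 2 * θ := by
  have key : (1 : ℂ) - (r : ℂ) * Complex.exp (θ * Complex.I) =
      (1 - Complex.exp (θ * Complex.I)) + ((1 : ℂ) - r) * Complex.exp (θ * Complex.I) := by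
    ring
  rw [key]
  calc ‖_‖ ≤ ‖1 - Complex.exp (θ * Complex.I)‖ +
        ‖((1 : ℂ) - r) * Complex.exp (θ * Complex.I)‖ := norm_add_le _ _
    _ ≤ 2 * θ + (1 - r) := by
        have h1 : ‖1 - Complex.exp (θ * Complex.I)‖ ≤ 2 * θ := by
          have h2 : ‖(θ : ℂ) * Complex.I‖ ≤ 1 := by
            rw [norm_mul, Complex.norm_I, Complex.norm_real, Real.norm_eq_abs, abs_of_nonneg hθ0]
            simpa using hθ1
          have h4 := Complex.norm_exp_sub_one_le h2
          calc ‖1 - Complex.exp (θ * Complex.I)‖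
              = ‖Complex.exp (θ * Complex.I) - 1‖ := by
                rw [← norm_neg]; ring_nf
            _ ≤ 2 * ‖(θ:ℂ) * Complex.I‖ := h4
            _ = 2 * θ := by
                rw [norm_mul, Complex.norm_I, Complex.norm_real, Real.norm_eq_abs, abs_of_nonneg hθ0]; ring
        have h3 : ‖((1 : ℂ) - r) * Complex.exp (θ * Complex.I)‖ = 1 - r := by
          rw [show ((1:ℂ) - (r:ℂ)) = (((1 - r : ℝ)):ℂ) by push_cast; ring]
          exact abs_circle (by linarith) θ
        rw [h3]
        linarith
    _ = (1 - r) + 2 * θ := by ring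

/-- away from `θ = 0`: `|1 - r e^{iθ}| ≥ min θ (2π - θ) / 4` for `r ≥ 1/2`, `θ ∈ [0, 2π]`. -/
lemma abs_one_sub_circle_far {r : ℝ} (hr : 1/2 ≤ r) (hr1 : r ≤ 1) {θ : ℝ}
    (hθ0 : 0 ≤ θ) (hθ2 : θ ≤ 2 * π) :
    min θ (2 * π - θ) / 4 ≤ ‖1 - (r : ℂ) * Complex.exp (θ * Complex.I)‖ := by
  set d : ℝ := min θ (2 * π - θ) with hd
  have hd0 : 0 ≤ d := le_min hθ0 (by linarith)
  have hdπ : d ≤ π := by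
    have h1 : d ≤ θ := min_le_left _ _
    have h2 : d ≤ 2 * π - θ := min_le_right _ _
    linarith
  have hcos : Real.cos θ = Real.cos d := by
    rcases le_total θ π with h | h
    · rw [hd, min_eq_left (by linarith)]
    · rw [hd, min_eq_right (by linarith), ← Real.cos_two_pi_sub]
  have hsin : d / π ≤ Real.sin (d / 2) := by
    have := Real.mul_le_sin (x := d / 2) (by linarith) (by linarith)
    calc d / π = 2 / π * (d / 2) := by field_simp
      _ ≤ Real.sin (d / 2) := this
  have hcosd : Real.cos d = 1 - 2 * Real.sin (d / 2) ^ 2 := by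
    have h1 := Real.cos_two_mul (d / 2)
    have h2 := Real.sin_sq_add_cos_sq (d / 2)
    have h3 : 2 * (d / 2) = d := by ring
    rw [h3] at h1
    nlinarith
  have hsq := abs_one_sub_circle_sq r θ
  have hπ := Real.pi_pos
  have h1cos : 2 * (d / π) ^ 2 ≤ 1 - Real.cos θ := by
    rw [hcos, hcosd]
    nlinarith [mul_self_le_mul_self (div_nonneg hd0 hπ.le) hsin]
  have hππ : π ^ 2 ≤ 32 := by nlinarith [Real.pi_lt_d2]
  have hcos1 := Real.cos_le_one θ
  have ht2 : d ^ 2 / 16 ≤ ‖1 - (r : ℂ) * Complex.exp (θ * Complex.I)‖ ^ 2 := by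
    rw [hsq]
    have hb : 2 * (d/π)^2 = 2 * d^2 / π^2 := by field_simp
    rw [hb] at h1cos
    have hc : d^2 / 16 ≤ 2 * d^2 / π^2 := by
      rw [div_le_div_iff₀ (by norm_num) (by positivity)]
      nlinarith [sq_nonneg d]
    nlinarith [sq_nonneg (1 - r)]
  nlinarith [norm_nonneg (1 - (r : ℂ) * Complex.exp (θ * Complex.I)), hd0]



lemma contRpowConst {y : ℝ} (hy : 0 ≤ y) {f : ℝ × ℝ → ℝ} (hf : Continuous f) :
    Continuous fun x => f x ^ y :=
  hf.rpow_const (fun x => Or.inr hy)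

def cl (s r : ℝ) : ℝ := max 0 (min r s)

lemma cl_continuous (s : ℝ) : Continuous (cl s) :=
  continuous_const.max ((continuous_id.min continuous_const))

lemma cl_eq {s r : ℝ} (h0 : 0 ≤ r) (hs : r ≤ s) : cl s r = r := by
  unfold cl; rw [min_eq_left hs, max_eq_right h0]

lemma cl_mem {s r : ℝ} (hs : 0 ≤ s) : cl s r ∈ Icc 0 s := by
  unfold cl
  exact ⟨le_max_left _ _, max_le hs (min_le_right r s)⟩

/-- The key continuous uncurried map. -/
lemma contAbsF (lam c s : ℝ) (hs0 : 0 ≤ s) (hs : s < 1) :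
    Continuous (fun q : ℝ × ℝ =>
      ‖Ffun lam c ((cl s q.1 : ℂ) * Complex.exp ((q.2 : ℂ) * Complex.I))‖) := by
  have hcont : ContinuousOn (fun z => ‖Ffun lam c z‖) (Metric.closedBall 0 s) :=
    continuous_norm.comp_continuousOn
      (((Ffun_differentiableOn lam c).continuousOn).mono (Metric.closedBall_subset_ball (by simpa using hs)))
  apply hcont.comp_continuous
  · apply Continuous.mul
    · exact Complex.continuous_ofReal.comp ((cl_continuous s).comp continuous_fst)
    · exact Complex.continuous_exp.comp
        ((Complex.continuous_ofReal.comp continuous_snd).mul continuous_const)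
  · intro q
    rw [Metric.mem_closedBall, dist_zero_right,
      abs_circle (cl_mem hs0).1 _]
    exact (cl_mem hs0).2

lemma intMean_continuousOn (p : ℝ≥0∞) (hp : p ≠ 0) (lam c s : ℝ) (hs0 : 0 ≤ s) (hs : s < 1) :
    ContinuousOn (fun r => intMean p (Ffun lam c) r) (Icc 0 s) := by
  have hG : Continuous (fun r => intMean p (Ffun lam c) (cl s r)) := by
    rcases eq_or_ne p ⊤ with hptop | hptop
    · subst hptop
      simp only [intMean, if_pos rfl]
      exact IsCompact.continuous_sSup isCompact_Icc (contAbsF lam c s hs0 hs)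
    · simp only [intMean, if_neg hptop]
      apply Continuous.rpow_const
      · apply continuous_const.mul
        apply intervalIntegral.continuous_parametric_intervalIntegral_of_continuous'
        exact contRpowConst ENNReal.toReal_nonneg (contAbsF lam c s hs0 hs)
      · exact fun x => Or.inr (by positivity)
  exact hG.continuousOn.congr (fun r hr => by beta_reduce; rw [cl_eq hr.1 hr.2])

lemma integrand_continuousOn (p : ℝ≥0∞) (hp : p ≠ 0) (lam c s e qt : ℝ)
    (hs0 : 0 ≤ s) (hs : s < 1) (hqt : 0 ≤ qt) :
    ContinuousOn
      (fun r : ℝ => (1 - r) ^ e * intMean p (Ffun lam c) r ^ qt) (Icc 0 s) := by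
  apply ContinuousOn.mul
  · apply ContinuousOn.rpow_const (continuous_const.sub continuous_id).continuousOn
    intro x hx
    left
    intro hcon
    simp only [Pi.sub_apply, id] at hcon
    nlinarith [hs, hx.2]
  · apply ContinuousOn.rpow_const (intMean_continuousOn p hp lam c s hs0 hs)
    exact fun x hx => Or.inr hqt



section PW
variable {lam c r θ : ℝ}

/-- Upper pointwise bound for `c > 0`. -/
lemma absF_le (hc : 0 ≤ c) (hr0 : 0 ≤ r) (hr1 : r < 1) (θ : ℝ) :
    ‖Ffun lam c ((r : ℂ) * Complex.exp ((θ : ℂ) * Complex.I))‖ ≤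
      ‖1 - (r : ℂ) * Complex.exp ((θ : ℂ) * Complex.I)‖ ^ (-lam) *
        Lg (‖1 - (r : ℂ) * Complex.exp ((θ : ℂ) * Complex.I)‖) ^ (-c) := by
  set z : ℂ := (r : ℂ) * Complex.exp ((θ : ℂ) * Complex.I) with hzdef
  have hz : ‖z‖ < 1 := by rw [hzdef, abs_circle hr0]; exact hr1
  rw [abs_Ffun hz lam c]
  apply mul_le_mul_of_nonneg_left _ (Real.rpow_nonneg (norm_nonneg _) _)
  have h1 := abs_log_ge hz
  have h2 : 0 < Lg (‖1 - z‖) :=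
    Lg_pos (norm_nonneg _) (abs_one_sub_lt_two hz).le
  exact Real.rpow_le_rpow_of_nonpos h2 h1 (by linarith)

/-- Lower pointwise bound, any `c`. -/
lemma absF_ge (hr0 : 0 ≤ r) (hr1 : r < 1) (lam c : ℝ) (θ : ℝ) :
    K₁ ^ (-|c|) *
      (‖1 - (r : ℂ) * Complex.exp ((θ : ℂ) * Complex.I)‖ ^ (-lam) *
        Lg (‖1 - (r : ℂ) * Complex.exp ((θ : ℂ) * Complex.I)‖) ^ (-c)) ≤
      ‖Ffun lam c ((r : ℂ) * Complex.exp ((θ : ℂ) * Complex.I))‖ := by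
  set z : ℂ := (r : ℂ) * Complex.exp ((θ : ℂ) * Complex.I) with hzdef
  have hz : ‖z‖ < 1 := by rw [hzdef, abs_circle hr0]; exact hr1
  rw [abs_Ffun hz lam c]
  rw [show K₁ ^ (-|c|) * (‖1 - z‖ ^ (-lam) * Lg (‖1 - z‖) ^ (-c)) =
    ‖1 - z‖ ^ (-lam) * (K₁ ^ (-|c|) * Lg (‖1 - z‖) ^ (-c)) by ring]
  apply mul_le_mul_of_nonneg_left _ (Real.rpow_nonneg (norm_nonneg _) _)
  have hL : 0 < Lg (‖1 - z‖) :=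
    Lg_pos (norm_nonneg _) (abs_one_sub_lt_two hz).le
  have hwpos : 0 < ‖Complex.log (Complex.exp 1 / (1 - z))‖ :=
    norm_pos_iff.mpr (log_exp_div_ne hz)
  rcases le_or_gt 0 c with hc | hc
  · -- c ≥ 0 : use |w| ≤ K₁ Lg
    have h1 := abs_log_le hz
    have : ‖Complex.log (Complex.exp 1 / (1 - z))‖ ^ (-c) ≥
        (K₁ * Lg (‖1 - z‖)) ^ (-c) :=
      Real.rpow_le_rpow_of_nonpos hwpos h1 (by linarith)
    rw [Real.mul_rpow K₁_pos.le hL.le] at this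
    rwa [abs_of_nonneg hc]
  · -- c < 0 : use Lg ≤ |w| and K₁^(-|c|) ≤ 1
    have h1 := abs_log_ge hz
    have h2 : Lg (‖1 - z‖) ^ (-c) ≤
        ‖Complex.log (Complex.exp 1 / (1 - z))‖ ^ (-c) :=
      Real.rpow_le_rpow hL.le h1 (by linarith)
    have h3 : K₁ ^ (-|c|) ≤ 1 :=
      Real.rpow_le_one_of_one_le_of_nonpos one_le_K₁ (neg_nonpos.2 (abs_nonneg c))
    nlinarith [Real.rpow_nonneg hL.le (-c), Real.rpow_pos_of_pos hL (-c)]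

end PW



lemma contCircle (lam c : ℝ) {r : ℝ} (hr0 : 0 ≤ r) (hr1 : r < 1) :
    Continuous (fun θ : ℝ =>
      ‖Ffun lam c ((r : ℂ) * Complex.exp ((θ : ℂ) * Complex.I))‖) := by
  have hcont : ContinuousOn (fun z => ‖Ffun lam c z‖) (Metric.closedBall 0 r) :=
    continuous_norm.comp_continuousOn
      (((Ffun_differentiableOn lam c).continuousOn).mono
        (Metric.closedBall_subset_ball (by simpa using hr1)))
  apply hcont.comp_continuous
  · exact continuous_const.mul
      (Complex.continuous_exp.comp (Complex.continuous_ofReal.mul continuous_const))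
  · intro θ
    rw [Metric.mem_closedBall, dist_zero_right, abs_circle hr0]

lemma theta_integral_upper (α c pt : ℝ) (hα : 0 < α) (hc : 0 < c) (hpt : 0 < pt) :
    ∃ C : ℝ, 0 < C ∧ ∀ r : ℝ, 1/2 ≤ r → r < 1 →
      (∫ θ in (0:ℝ)..(2*π),
          ‖Ffun (α + pt⁻¹) c ((r:ℂ) * Complex.exp ((θ:ℂ) * Complex.I))‖ ^ pt)
        ≤ C * ((1-r) ^ (-(α*pt)) * Lg (1-r) ^ (-(c*pt))) := by
  set ε : ℝ := α * pt / 2 with hεdef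
  have hε : 0 < ε := by positivity
  set μ : ℝ := c * pt with hμdef
  have hμ : 0 < μ := by positivity
  obtain ⟨C₀, hC₀, hcore⟩ := core_lemma hε hμ.le
  set C₅ : ℝ := 2 * (4 + 4 ^ (1+ε) / ε) with hC₅def
  have hC₅ : 0 < C₅ := by positivity
  refine ⟨C₀ * C₅, by positivity, fun r hr hr1 => ?_⟩
  have hπ := Real.pi_pos
  set a : ℝ := 1 - r with hadef
  have ha : 0 < a := by simp [hadef]; linarith
  have ha2 : a ≤ 1/2 := by simp [hadef]; linarith
  have hr0 : (0:ℝ) ≤ r := by linarith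
  set m : ℝ → ℝ := fun θ => max a (min θ (2*π - θ) / 4) with hmdef
  have hm_pos : ∀ θ, 0 < m θ := fun θ => lt_of_lt_of_le ha (le_max_left _ _)
  have hm_cont : Continuous m :=
    continuous_const.max ((continuous_id.min (continuous_const.sub continuous_id)).div_const 4)
  have hminteg : Continuous fun θ => m θ ^ (-(1+ε)) :=
    hm_cont.rpow_const (fun θ => Or.inl (hm_pos θ).ne')
  set A : ℝ → ℝ := fun θ =>
      ‖Ffun (α + pt⁻¹) c ((r:ℂ) * Complex.exp ((θ:ℂ) * Complex.I))‖ ^ pt with hAdef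
  have hA_cont : Continuous A :=
    (contCircle _ c hr0 hr1).rpow_const (fun θ => Or.inr hpt.le)
  -- Step A : pointwise bound
  have stepA : ∀ θ ∈ Icc (0:ℝ) (2*π),
      A θ ≤ C₀ * (a ^ (-ε) * Lg a ^ (-μ)) * m θ ^ (-(1+ε)) := by
    intro θ hθ
    set t : ℝ := ‖1 - (r:ℂ) * Complex.exp ((θ:ℂ) * Complex.I)‖ with htdef
    have hta : a ≤ t := by
      rw [htdef, hadef]; exact abs_one_sub_circle_ge r θ hr0 hr1.le
    have ht0 : 0 < t := lt_of_lt_of_le ha hta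
    have ht2 : t ≤ 2 := abs_one_sub_circle_le_two hr0 hr1.le θ
    have htfar : min θ (2*π - θ) / 4 ≤ t :=
      abs_one_sub_circle_far hr hr1.le hθ.1 hθ.2
    have hmt : m θ ≤ t := max_le hta htfar
    have hLt : 0 < Lg t := Lg_pos ht0.le ht2
    have h1 : A θ ≤ (t ^ (-(α + pt⁻¹)) * Lg t ^ (-c)) ^ pt := by
      rw [hAdef]
      exact Real.rpow_le_rpow (norm_nonneg _) (absF_le hc.le hr0 hr1 θ) hpt.le
    have hexp : -(α + pt⁻¹) * pt = (-(1+ε)) + (-ε) := by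
      rw [hεdef]
      field_simp
      ring
    have h2 : (t ^ (-(α + pt⁻¹)) * Lg t ^ (-c)) ^ pt =
        t ^ (-(1+ε)) * (t ^ (-ε) * Lg t ^ (-μ)) := by
      rw [Real.mul_rpow (Real.rpow_nonneg ht0.le _) (Real.rpow_nonneg hLt.le _),
        ← Real.rpow_mul ht0.le, ← Real.rpow_mul hLt.le, hexp,
        Real.rpow_add ht0, hμdef, neg_mul]
      ring
    have h3 : t ^ (-(1+ε)) ≤ m θ ^ (-(1+ε)) :=
      Real.rpow_le_rpow_of_nonpos (hm_pos θ) hmt (by linarith)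
    have h4 : t ^ (-ε) * Lg t ^ (-μ) ≤ C₀ * (a ^ (-ε) * Lg a ^ (-μ)) :=
      hcore a t ha hta ht2
    calc A θ ≤ t ^ (-(1+ε)) * (t ^ (-ε) * Lg t ^ (-μ)) := by rw [← h2]; exact h1
      _ ≤ m θ ^ (-(1+ε)) * (C₀ * (a ^ (-ε) * Lg a ^ (-μ))) := by
          apply mul_le_mul h3 h4 (by positivity) (by positivity)
      _ = C₀ * (a ^ (-ε) * Lg a ^ (-μ)) * m θ ^ (-(1+ε)) := by ring
  -- Step B : integrate
  have hIIA : IntervalIntegrable A volume 0 (2*π) := hA_cont.intervalIntegrable _ _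
  have hIIm : ∀ u v : ℝ, IntervalIntegrable (fun θ => m θ ^ (-(1+ε))) volume u v :=
    fun u v => hminteg.intervalIntegrable _ _
  have stepB : (∫ θ in (0:ℝ)..(2*π), A θ) ≤
      C₀ * (a ^ (-ε) * Lg a ^ (-μ)) * ∫ θ in (0:ℝ)..(2*π), m θ ^ (-(1+ε)) := by
    rw [← intervalIntegral.integral_const_mul]
    apply intervalIntegral.integral_mono_on (by positivity) hIIA
      ((hIIm 0 (2*π)).const_mul _) stepA
  -- Step C : the m-integral
  have hsymm : (∫ θ in π..(2*π), m θ ^ (-(1+ε))) = ∫ θ in (0:ℝ)..π, m θ ^ (-(1+ε)) := by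
    have h0 := intervalIntegral.integral_comp_sub_left
      (a := π) (b := 2*π) (fun u => m u ^ (-(1+ε))) (2*π)
    simp only [show 2*π - 2*π = (0:ℝ) by ring, show 2*π - π = π by ring] at h0
    have h1 : (∫ x in π..(2*π), m (2*π - x) ^ (-(1+ε))) = ∫ x in π..(2*π), m x ^ (-(1+ε)) := by
      apply intervalIntegral.integral_congr
      intro x hx
      show m (2*π - x) ^ (-(1+ε)) = m x ^ (-(1+ε))
      have hmm : m (2*π - x) = m x := by
        rw [hmdef]
        simp only
        rw [show 2*π - (2*π - x) = x by ring, min_comm]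
      rw [hmm]
    rw [← h1, h0]
  have hsplit1 : (∫ θ in (0:ℝ)..(2*π), m θ ^ (-(1+ε))) =
      (∫ θ in (0:ℝ)..π, m θ ^ (-(1+ε))) + ∫ θ in π..(2*π), m θ ^ (-(1+ε)) :=
    (intervalIntegral.integral_add_adjacent_intervals (hIIm 0 π) (hIIm π (2*π))).symm
  have h4a : 4 * a ≤ π := by nlinarith [Real.pi_gt_three]
  have hsplit2 : (∫ θ in (0:ℝ)..π, m θ ^ (-(1+ε))) =
      (∫ θ in (0:ℝ)..(4*a), m θ ^ (-(1+ε))) + ∫ θ in (4*a)..π, m θ ^ (-(1+ε)) :=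
    (intervalIntegral.integral_add_adjacent_intervals (hIIm 0 (4*a)) (hIIm (4*a) π)).symm
  have hpiece1 : (∫ θ in (0:ℝ)..(4*a), m θ ^ (-(1+ε))) ≤ 4 * a ^ (-ε) := by
    have hb : (∫ θ in (0:ℝ)..(4*a), m θ ^ (-(1+ε))) ≤ ∫ θ in (0:ℝ)..(4*a), a ^ (-(1+ε)) := by
      apply intervalIntegral.integral_mono_on (by linarith) (hIIm 0 (4*a))
        (intervalIntegrable_const)
      intro θ hθ
      exact Real.rpow_le_rpow_of_nonpos ha (le_max_left _ _) (by linarith)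
    rw [intervalIntegral.integral_const, smul_eq_mul] at hb
    calc (∫ θ in (0:ℝ)..(4*a), m θ ^ (-(1+ε))) ≤ (4*a - 0) * a ^ (-(1+ε)) := hb
      _ = 4 * (a ^ (1:ℝ) * a ^ (-(1+ε))) := by rw [Real.rpow_one]; ring
      _ = 4 * a ^ (-ε) := by rw [← Real.rpow_add ha]; norm_num
  have h0uIcc : (0:ℝ) ∉ Set.uIcc (4*a) π := by
    rw [Set.uIcc_of_le (by linarith)]
    intro h
    have := h.1
    nlinarith
  have hpiece2 : (∫ θ in (4*a)..π, m θ ^ (-(1+ε))) ≤ 4 ^ (1+ε) / ε * a ^ (-ε) := by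
    have hIIrpow : IntervalIntegrable (fun θ : ℝ => (4:ℝ) ^ (1+ε) * θ ^ (-(1+ε)))
        volume (4*a) π :=
      (intervalIntegral.intervalIntegrable_rpow (Or.inr h0uIcc)).const_mul _
    have hb : (∫ θ in (4*a)..π, m θ ^ (-(1+ε))) ≤
        ∫ θ in (4*a)..π, 4 ^ (1+ε) * θ ^ (-(1+ε)) := by
      apply intervalIntegral.integral_mono_on (by linarith) (hIIm (4*a) π) hIIrpow
      intro θ hθ
      have hθ0 : 0 < θ := lt_of_lt_of_le (by positivity) hθ.1
      have hmθ : θ / 4 ≤ m θ := by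
        apply le_trans _ (le_max_right _ _)
        have hmin : min θ (2*π - θ) = θ := min_eq_left (by nlinarith [hθ.2])
        rw [hmin]
      have h5 : m θ ^ (-(1+ε)) ≤ (θ/4) ^ (-(1+ε)) :=
        Real.rpow_le_rpow_of_nonpos (by positivity) hmθ (by linarith)
      calc m θ ^ (-(1+ε)) ≤ (θ/4) ^ (-(1+ε)) := h5
        _ = 4 ^ (1+ε) * θ ^ (-(1+ε)) := by
            rw [Real.div_rpow hθ0.le (by norm_num),
              Real.rpow_neg (by norm_num : (0:ℝ) ≤ 4) (1+ε), div_eq_mul_inv, inv_inv]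
            ring
    have hval : (∫ θ in (4*a)..π, (4:ℝ) ^ (1+ε) * θ ^ (-(1+ε))) =
        4 ^ (1+ε) * ((π ^ (-ε) - (4*a) ^ (-ε)) / (-ε)) := by
      rw [intervalIntegral.integral_const_mul]
      congr 1
      rw [integral_rpow (Or.inr ⟨by intro h; rw [neg_eq_iff_eq_neg] at h; nlinarith [hε],
        h0uIcc⟩)]
      norm_num
    have h4aε : (4*a) ^ (-ε) ≤ a ^ (-ε) := by
      rw [Real.mul_rpow (by norm_num) ha.le]
      nlinarith [Real.rpow_le_one_of_one_le_of_nonpos (by norm_num : (1:ℝ) ≤ 4)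
        (by linarith : -ε ≤ 0), Real.rpow_pos_of_pos ha (-ε),
        Real.rpow_nonneg (by norm_num : (0:ℝ) ≤ 4) (-ε)]
    have hπε : (0:ℝ) ≤ π ^ (-ε) := Real.rpow_nonneg hπ.le _
    have key : (π ^ (-ε) - (4*a) ^ (-ε)) / (-ε) ≤ a ^ (-ε) / ε := by
      rw [div_neg, ← neg_div, neg_sub, div_le_div_iff₀ hε hε]
      nlinarith [hπε, h4aε, hε]
    calc (∫ θ in (4*a)..π, m θ ^ (-(1+ε))) ≤ 4 ^ (1+ε) * ((π ^ (-ε) - (4*a) ^ (-ε)) / (-ε)) := by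
          rw [← hval]; exact hb
      _ ≤ 4 ^ (1+ε) * (a ^ (-ε) / ε) := mul_le_mul_of_nonneg_left key (by positivity)
      _ = 4 ^ (1+ε) / ε * a ^ (-ε) := by ring
  -- Total
  have hmtotal : (∫ θ in (0:ℝ)..(2*π), m θ ^ (-(1+ε))) ≤ C₅ * a ^ (-ε) := by
    rw [hsplit1, hsymm, hsplit2, hC₅def]
    nlinarith [hpiece1, hpiece2]
  have hfinal : C₀ * (a ^ (-ε) * Lg a ^ (-μ)) * (∫ θ in (0:ℝ)..(2*π), m θ ^ (-(1+ε)))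
      ≤ C₀ * C₅ * (a ^ (-(α*pt)) * Lg a ^ (-(c*pt))) := by
    have hLa : 0 < Lg a := Lg_pos ha.le (by linarith)
    have h6 : C₀ * (a ^ (-ε) * Lg a ^ (-μ)) * (∫ θ in (0:ℝ)..(2*π), m θ ^ (-(1+ε)))
        ≤ C₀ * (a ^ (-ε) * Lg a ^ (-μ)) * (C₅ * a ^ (-ε)) :=
      mul_le_mul_of_nonneg_left hmtotal (by positivity)
    have h8 : a ^ (-ε) * a ^ (-ε) = a ^ (-(α*pt)) := by
      rw [← Real.rpow_add ha]
      congr 1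
      rw [hεdef]; ring
    have h9 : Lg a ^ (-μ) = Lg a ^ (-(c*pt)) := by rw [hμdef]
    calc C₀ * (a ^ (-ε) * Lg a ^ (-μ)) * (∫ θ in (0:ℝ)..(2*π), m θ ^ (-(1+ε)))
        ≤ C₀ * (a ^ (-ε) * Lg a ^ (-μ)) * (C₅ * a ^ (-ε)) := h6
      _ = C₀ * C₅ * ((a ^ (-ε) * a ^ (-ε)) * Lg a ^ (-μ)) := by ring
      _ = C₀ * C₅ * (a ^ (-(α*pt)) * Lg a ^ (-(c*pt))) := by rw [h8, h9]
  calc (∫ θ in (0:ℝ)..(2*π), A θ) ≤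
      C₀ * (a ^ (-ε) * Lg a ^ (-μ)) * ∫ θ in (0:ℝ)..(2*π), m θ ^ (-(1+ε)) := stepB
    _ ≤ C₀ * C₅ * (a ^ (-(α*pt)) * Lg a ^ (-(c*pt))) := hfinal



lemma sup_bddAbove (lam c : ℝ) {r : ℝ} (hr0 : 0 ≤ r) (hr1 : r < 1) :
    BddAbove ((fun θ : ℝ =>
      ‖Ffun lam c ((r:ℂ) * Complex.exp ((θ:ℂ) * Complex.I))‖) '' Icc 0 (2*π)) :=
  (isCompact_Icc.image (contCircle lam c hr0 hr1)).bddAbove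

lemma intMean_nonneg (p : ℝ≥0∞) (lam c : ℝ) {r : ℝ} (hr0 : 0 ≤ r) (hr1 : r < 1) :
    0 ≤ intMean p (Ffun lam c) r := by
  rcases eq_or_ne p ⊤ with hptop | hptop
  · subst hptop
    rw [intMean, if_pos rfl]
    have hmem : ‖Ffun lam c ((r:ℂ) * Complex.exp (((0:ℝ):ℂ) * Complex.I))‖ ∈
        (fun θ : ℝ => ‖Ffun lam c ((r:ℂ) * Complex.exp ((θ:ℂ) * Complex.I))‖) ''
          Icc 0 (2*π) :=
      ⟨0, ⟨le_rfl, by positivity⟩, rfl⟩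
    exact le_trans (norm_nonneg _) (le_csSup (sup_bddAbove lam c hr0 hr1) hmem)
  · rw [intMean, if_neg hptop]
    apply Real.rpow_nonneg
    have h1 : 0 ≤ ∫ θ in (0:ℝ)..(2*π),
        ‖Ffun lam c ((r:ℂ) * Complex.exp ((θ:ℂ) * Complex.I))‖ ^ p.toReal := by
      apply intervalIntegral.integral_nonneg (by positivity)
      intro u hu
      positivity
    have h2 : (0:ℝ) ≤ 1 / (2*π) := by positivity
    positivity

lemma intMean_upper (p : ℝ≥0∞) (hp : p ≠ 0) (α c : ℝ) (hα : 0 < α) (hc : 0 < c) :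
    ∃ C : ℝ, 0 < C ∧ ∀ r : ℝ, 1/2 ≤ r → r < 1 →
      intMean p (Ffun (α + p⁻¹.toReal) c) r ≤ C * ((1-r) ^ (-α) * Lg (1-r) ^ (-c)) := by
  rcases eq_or_ne p ⊤ with hptop | hptop
  · -- p = ∞
    subst hptop
    obtain ⟨C₀, hC₀, hcore⟩ := core_lemma hα hc.le
    refine ⟨C₀, hC₀, fun r hr hr1 => ?_⟩
    have hr0 : (0:ℝ) ≤ r := by linarith
    have hlam : (⊤ : ℝ≥0∞)⁻¹.toReal = 0 := by simp
    have ha : 0 < 1 - r := by linarith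
    rw [intMean, if_pos rfl]
    apply csSup_le
    · exact ⟨_, ⟨0, ⟨le_rfl, by positivity⟩, rfl⟩⟩
    · rintro x ⟨θ, hθ, rfl⟩
      simp only
      set t : ℝ := ‖1 - (r:ℂ) * Complex.exp ((θ:ℂ) * Complex.I)‖ with htdef
      have hta : 1 - r ≤ t := abs_one_sub_circle_ge r θ hr0 hr1.le
      have ht0 : 0 < t := lt_of_lt_of_le ha hta
      have ht2 : t ≤ 2 := abs_one_sub_circle_le_two hr0 hr1.le θ
      calc ‖Ffun (α + (⊤:ℝ≥0∞)⁻¹.toReal) c ((r:ℂ) * Complex.exp ((θ:ℂ) * Complex.I))‖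
          ≤ t ^ (-(α + (⊤:ℝ≥0∞)⁻¹.toReal)) * Lg t ^ (-c) := absF_le hc.le hr0 hr1 θ
        _ = t ^ (-α) * Lg t ^ (-c) := by rw [hlam, add_zero]
        _ ≤ C₀ * ((1-r) ^ (-α) * Lg (1-r) ^ (-c)) := hcore (1-r) t ha hta ht2
  · -- p finite
    set pt : ℝ := p.toReal with hptdef
    have hpt : 0 < pt := ENNReal.toReal_pos hp hptop
    have hlam : p⁻¹.toReal = pt⁻¹ := by rw [ENNReal.toReal_inv]
    obtain ⟨C, hC, hbound⟩ := theta_integral_upper α c pt hα hc hpt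
    have hπ := Real.pi_pos
    refine ⟨(1 / (2*π) * C) ^ (1/pt), Real.rpow_pos_of_pos (by positivity) _,
      fun r hr hr1 => ?_⟩
    have hr0 : (0:ℝ) ≤ r := by linarith
    have ha : 0 < 1 - r := by linarith
    have hLa : 0 < Lg (1-r) := Lg_pos ha.le (by linarith)
    rw [intMean, if_neg hptop, hlam]
    have hInonneg : 0 ≤ ∫ θ in (0:ℝ)..(2*π),
        ‖Ffun (α + pt⁻¹) c ((r:ℂ) * Complex.exp ((θ:ℂ) * Complex.I))‖ ^ pt := by
      apply intervalIntegral.integral_nonneg (by positivity)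
      intro u hu; positivity
    have h1 : (1 / (2*π)) * (∫ θ in (0:ℝ)..(2*π),
          ‖Ffun (α + pt⁻¹) c ((r:ℂ) * Complex.exp ((θ:ℂ) * Complex.I))‖ ^ pt)
        ≤ (1 / (2*π) * C) * ((1-r) ^ (-(α*pt)) * Lg (1-r) ^ (-(c*pt))) := by
      have := hbound r hr hr1
      calc (1 / (2*π)) * (∫ θ in (0:ℝ)..(2*π),
            ‖Ffun (α + pt⁻¹) c ((r:ℂ) * Complex.exp ((θ:ℂ) * Complex.I))‖ ^ pt)
          ≤ (1 / (2*π)) * (C * ((1-r) ^ (-(α*pt)) * Lg (1-r) ^ (-(c*pt)))) :=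
            mul_le_mul_of_nonneg_left this (by positivity)
        _ = (1 / (2*π) * C) * ((1-r) ^ (-(α*pt)) * Lg (1-r) ^ (-(c*pt))) := by ring
    calc ((1 / (2*π)) * (∫ θ in (0:ℝ)..(2*π),
          ‖Ffun (α + pt⁻¹) c ((r:ℂ) * Complex.exp ((θ:ℂ) * Complex.I))‖ ^ pt)) ^ (1/pt)
        ≤ ((1 / (2*π) * C) * ((1-r) ^ (-(α*pt)) * Lg (1-r) ^ (-(c*pt)))) ^ (1/pt) := by
          apply Real.rpow_le_rpow (by positivity) h1 (by positivity)
      _ = (1 / (2*π) * C) ^ (1/pt) * ((1-r) ^ (-α) * Lg (1-r) ^ (-c)) := by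
          rw [Real.mul_rpow (by positivity) (by positivity)]
          congr 1
          rw [Real.mul_rpow (by positivity) (by positivity),
            ← Real.rpow_mul ha.le, ← Real.rpow_mul hLa.le,
            show -(α*pt)*(1/pt) = -α by field_simp,
            show -(c*pt)*(1/pt) = -c by field_simp]
  
lemma intMean_lower (p : ℝ≥0∞) (hp : p ≠ 0) (α c : ℝ) (hα : 0 < α) :
    ∃ M : ℝ, 0 < M ∧ ∀ r : ℝ, 1/2 ≤ r → r < 1 →
      M * ((1-r) ^ (-α) * Lg (1-r) ^ (-c)) ≤ intMean p (Ffun (α + p⁻¹.toReal) c) r := by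
  have hπ := Real.pi_pos
  rcases eq_or_ne p ⊤ with hptop | hptop
  · -- p = ∞ : take the point θ = 0
    subst hptop
    refine ⟨K₁ ^ (-|c|), Real.rpow_pos_of_pos K₁_pos _, fun r hr hr1 => ?_⟩
    have hr0 : (0:ℝ) ≤ r := by linarith
    have ha : 0 < 1 - r := by linarith
    rw [intMean, if_pos rfl]
    have hmem : ‖Ffun (α + (⊤:ℝ≥0∞)⁻¹.toReal) c
        ((r:ℂ) * Complex.exp (((0:ℝ):ℂ) * Complex.I))‖ ∈
        (fun θ : ℝ => ‖Ffun (α + (⊤:ℝ≥0∞)⁻¹.toReal) c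
          ((r:ℂ) * Complex.exp ((θ:ℂ) * Complex.I))‖) '' Icc 0 (2*π) :=
      ⟨0, ⟨le_rfl, by positivity⟩, rfl⟩
    have hle := le_csSup (sup_bddAbove _ c hr0 hr1) hmem
    refine le_trans ?_ hle
    have hg := absF_ge hr0 hr1 (α + (⊤:ℝ≥0∞)⁻¹.toReal) c (0:ℝ)
    have ht : ‖1 - (r:ℂ) * Complex.exp (((0:ℝ):ℂ) * Complex.I)‖ = 1 - r := by
      rw [show (((0:ℝ):ℂ) * Complex.I) = 0 by simp, Complex.exp_zero, mul_one,
        show (1:ℂ) - (r:ℂ) = ((1 - r : ℝ):ℂ) by push_cast; ring, Complex.norm_real, Real.norm_eq_abs,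
        abs_of_pos ha]
    rw [ht] at hg
    have hlam : (⊤ : ℝ≥0∞)⁻¹.toReal = 0 := by simp
    rw [hlam, add_zero] at hg ⊢
    exact hg
  · -- p finite
    set pt : ℝ := p.toReal with hptdef
    have hpt : 0 < pt := ENNReal.toReal_pos hp hptop
    have hlam : p⁻¹.toReal = pt⁻¹ := by rw [ENNReal.toReal_inv]
    set lam : ℝ := α + pt⁻¹ with hlamdef
    set κ : ℝ := (1 + Real.log 2)⁻¹ with hκdef
    have hlog2 : 0 < Real.log 2 := Real.log_pos (by norm_num)
    have hκ : 0 < κ := by rw [hκdef]; positivity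
    have hκeq : κ * (1 + Real.log 2) = 1 := by
      rw [hκdef]; field_simp
    have hκ1 : κ ≤ 1 := by
      rw [hκdef, inv_eq_one_div, div_le_one (by linarith)]
      linarith
    set m₁ : ℝ := K₁ ^ (-|c|) * 2 ^ (-lam) * κ ^ |c| with hm₁def
    have hm₁ : 0 < m₁ := by
      have := K₁_pos
      rw [hm₁def]; positivity
    refine ⟨m₁ * (4*π) ^ (-(1/pt)), by positivity, fun r hr hr1 => ?_⟩
    have hr0 : (0:ℝ) ≤ r := by linarith
    set a : ℝ := 1 - r with hadef
    have ha : 0 < a := by rw [hadef]; linarith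
    have ha2 : a ≤ 1/2 := by rw [hadef]; linarith
    have hLa : 0 < Lg a := Lg_pos ha.le (by linarith)
    have hLa1 : 1 + Real.log 2 ≤ Lg a := by
      have := Real.log_le_log ha ha2
      have h2 : Real.log (1/2) = -Real.log 2 := by
        rw [one_div, Real.log_inv]
      rw [Lg]
      rw [h2] at this
      linarith
    -- pointwise lower bound on [0, a/2]
    set B : ℝ := m₁ * (a ^ (-lam) * Lg a ^ (-c)) with hBdef
    have hB : 0 < B := by
      have h1 : (0:ℝ) < a ^ (-lam) := Real.rpow_pos_of_pos ha _
      have h2 : (0:ℝ) < Lg a ^ (-c) := Real.rpow_pos_of_pos hLa _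
      rw [hBdef]; positivity
    have hpw : ∀ θ ∈ Icc (0:ℝ) (a/2),
        B ≤ ‖Ffun lam c ((r:ℂ) * Complex.exp ((θ:ℂ) * Complex.I))‖ := by
      intro θ hθ
      set t : ℝ := ‖1 - (r:ℂ) * Complex.exp ((θ:ℂ) * Complex.I)‖ with htdef
      have hta : a ≤ t := by rw [hadef]; exact abs_one_sub_circle_ge r θ hr0 hr1.le
      have ht0 : 0 < t := lt_of_lt_of_le ha hta
      have ht2a : t ≤ 2*a := by
        have := abs_one_sub_circle_near hr0 hr1.le hθ.1 (by nlinarith [hθ.2])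
        rw [htdef, hadef]
        nlinarith [hθ.2]
      have hLgt_le : Lg t ≤ Lg a := Lg_anti ha hta
      have hLgt_ge : κ * Lg a ≤ Lg t := by
        have h1 : Lg (2*a) ≤ Lg t := Lg_anti ht0 ht2a
        have h2 : Lg (2*a) = Lg a - Real.log 2 := by
          rw [Lg, Lg, Real.log_mul (by norm_num) ha.ne']
          ring
        rw [h2] at h1
        nlinarith [hLa1, hκ1, hκ, hκeq]
      have hLgc : κ ^ |c| * Lg a ^ (-c) ≤ Lg t ^ (-c) := by
        have hLt0 : 0 < Lg t := lt_of_lt_of_le (by positivity) hLgt_ge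
        rcases le_or_gt 0 c with hc | hc
        · have h3 : Lg t ^ (-c) ≥ Lg a ^ (-c) :=
            Real.rpow_le_rpow_of_nonpos hLt0 hLgt_le (by linarith)
          have h4 : κ ^ |c| ≤ 1 :=
            Real.rpow_le_one hκ.le hκ1 (abs_nonneg c)
          nlinarith [Real.rpow_nonneg hLa.le (-c), Real.rpow_pos_of_pos hLa (-c)]
        · have h3 : (κ * Lg a) ^ (-c) ≤ Lg t ^ (-c) :=
            Real.rpow_le_rpow (by positivity) hLgt_ge (by linarith)
          rw [Real.mul_rpow hκ.le hLa.le] at h3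
          rw [show |c| = -c by rw [abs_of_neg hc]]
          exact h3
      have htlam : 2 ^ (-lam) * a ^ (-lam) ≤ t ^ (-lam) := by
        rw [← Real.mul_rpow (by norm_num) ha.le]
        exact Real.rpow_le_rpow_of_nonpos ht0 ht2a (by
          rw [hlamdef]
          have : (0:ℝ) < pt⁻¹ := by positivity
          linarith)
      have hg := absF_ge hr0 hr1 lam c θ
      rw [← htdef] at hg
      refine le_trans ?_ hg
      rw [hBdef, hm₁def]
      calc K₁ ^ (-|c|) * 2 ^ (-lam) * κ ^ |c| * (a ^ (-lam) * Lg a ^ (-c))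
          = K₁ ^ (-|c|) * ((2 ^ (-lam) * a ^ (-lam)) * (κ ^ |c| * Lg a ^ (-c))) := by ring
        _ ≤ K₁ ^ (-|c|) * (t ^ (-lam) * Lg t ^ (-c)) := by
            apply mul_le_mul_of_nonneg_left _ (Real.rpow_nonneg K₁_pos.le _)
            apply mul_le_mul htlam hLgc (by positivity) (Real.rpow_nonneg (by positivity) _)
    -- integrate
    rw [intMean, if_neg hptop, hlam, ← hlamdef]
    set A : ℝ → ℝ := fun θ =>
      ‖Ffun lam c ((r:ℂ) * Complex.exp ((θ:ℂ) * Complex.I))‖ ^ pt with hAdef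
    have hA_cont : Continuous A :=
      (contCircle lam c hr0 hr1).rpow_const (fun θ => Or.inr hpt.le)
    have hIIA : ∀ u v : ℝ, IntervalIntegrable A volume u v :=
      fun u v => hA_cont.intervalIntegrable u v
    have hbig : (a/2) * B ^ pt ≤ ∫ θ in (0:ℝ)..(2*π), A θ := by
      have h1 : (∫ θ in (0:ℝ)..(a/2), A θ) ≤ ∫ θ in (0:ℝ)..(2*π), A θ := by
        apply intervalIntegral.integral_mono_interval le_rfl (by linarith) (by nlinarith [Real.pi_gt_three])
        · filter_upwards with x
          rw [hAdef]
          positivity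
        · exact hIIA 0 (2*π)
      have h2 : (a/2) * B ^ pt ≤ ∫ θ in (0:ℝ)..(a/2), A θ := by
        have h3 : (∫ θ in (0:ℝ)..(a/2), B ^ pt) ≤ ∫ θ in (0:ℝ)..(a/2), A θ := by
          apply intervalIntegral.integral_mono_on (by linarith) intervalIntegrable_const
            (hIIA 0 (a/2))
          intro θ hθ
          rw [hAdef]
          exact Real.rpow_le_rpow hB.le (hpw θ hθ) hpt.le
        rw [intervalIntegral.integral_const, smul_eq_mul, sub_zero] at h3
        exact h3
      linarith
    have hmono : ((1 / (2*π)) * ((a/2) * B ^ pt)) ^ (1/pt) ≤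
        ((1 / (2*π)) * ∫ θ in (0:ℝ)..(2*π), A θ) ^ (1/pt) := by
      apply Real.rpow_le_rpow (by positivity)
        (mul_le_mul_of_nonneg_left hbig (by positivity)) (by positivity)
    refine le_trans ?_ hmono
    have hkey : ((1 / (2*π)) * ((a/2) * B ^ pt)) ^ (1/pt) =
        (a ^ (1/pt) * (4*π) ^ (-(1/pt))) * B := by
      have he1 : (1 / (2*π)) * ((a/2) * B ^ pt) = (a / (4*π)) * B ^ pt := by
        field_simp
        ring
      rw [he1, Real.mul_rpow (by positivity) (by positivity),
        ← Real.rpow_mul hB.le, mul_one_div_cancel hpt.ne', Real.rpow_one,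
        Real.div_rpow ha.le (by positivity), Real.rpow_neg (by positivity),
        div_eq_mul_inv]
    rw [hkey]
    apply le_of_eq
    calc m₁ * (4*π) ^ (-(1/pt)) * (a ^ (-α) * Lg a ^ (-c))
        = (a ^ (-α) * (4*π) ^ (-(1/pt))) * (m₁ * Lg a ^ (-c)) := by ring
      _ = (a ^ (1/pt) * (4*π) ^ (-(1/pt))) * B := by
          rw [hBdef]
          have hsplit : a ^ (-α : ℝ) = a ^ (1/pt) * a ^ (-lam) := by
            rw [← Real.rpow_add ha]
            congr 1
            rw [hlamdef, one_div]
            ring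
          rw [hsplit]
          ring



lemma hasDerivAt_LgOneSub {r : ℝ} (hr : r < 1) :
    HasDerivAt (fun x : ℝ => Lg (1 - x)) ((1-r)⁻¹) r := by
  have h1 : (0:ℝ) < 1 - r := by linarith
  have hg : HasDerivAt (fun x : ℝ => 1 - x) (-1) r := by
    simpa using (hasDerivAt_id r).const_sub 1
  have hlog : HasDerivAt (fun x : ℝ => Real.log (1 - x)) ((1-r)⁻¹ * (-1)) r :=
    (Real.hasDerivAt_log h1.ne').comp r hg
  have := hlog.const_sub 1
  simpa [Lg] using this
  
lemma contOn_D {β u v : ℝ} (hu : 0 ≤ u) (hv : v < 1) :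
    ContinuousOn (fun r : ℝ => (1-r)⁻¹ * Lg (1-r) ^ (-β)) (Icc u v) := by
  intro x hx
  have h1 : (0:ℝ) < 1 - x := by have := hx.2; linarith
  have hL : 0 < Lg (1 - x) := Lg_pos h1.le (by linarith [hx.1])
  apply ContinuousAt.continuousWithinAt
  apply ContinuousAt.mul
  · exact ((continuous_const.sub continuous_id).continuousAt).inv₀ h1.ne'
  · have hcont : ContinuousAt (fun x : ℝ => Lg (1-x)) x := by
      have h2 : ContinuousAt (fun x : ℝ => Real.log (1-x)) x :=
        (Real.continuousAt_log h1.ne').comp ((continuous_const.sub continuous_id).continuousAt)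
      exact continuousAt_const.sub h2
    exact hcont.rpow_const (Or.inl hL.ne')

/-- bounded primitive bound for `β > 1`. -/
lemma int_D_bounded {β : ℝ} (hβ : 1 < β) :
    ∀ T : ℝ, 1/2 ≤ T → T < 1 →
      (∫ r in (1/2:ℝ)..T, (1-r)⁻¹ * Lg (1-r) ^ (-β)) ≤ (β-1)⁻¹ * Lg (1/2) ^ (1-β) := by
  intro T hT hT1
  set Φ : ℝ → ℝ := fun r => -(β-1)⁻¹ * Lg (1-r) ^ (1-β) with hΦdef
  have hderiv : ∀ x ∈ Set.uIcc (1/2:ℝ) T, HasDerivAt Φ ((1-x)⁻¹ * Lg (1-x) ^ (-β)) x := by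
    intro x hx
    rw [Set.uIcc_of_le hT] at hx
    have hx1 : x < 1 := lt_of_le_of_lt hx.2 hT1
    have h1 : (0:ℝ) < 1 - x := by linarith
    have hL : 0 < Lg (1 - x) := Lg_pos h1.le (by linarith [hx.1])
    have hu := hasDerivAt_LgOneSub hx1
    have hpow := (Real.hasDerivAt_rpow_const (p := 1-β) (Or.inl hL.ne')).comp x hu
    have hd := hpow.const_mul (-(β-1)⁻¹)
    refine hd.congr_deriv ?_
    rw [show (1:ℝ) - β - 1 = -β by ring]
    have hb1 : β - 1 ≠ 0 := by linarith
    field_simp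
    ring
  have hint : IntervalIntegrable (fun r : ℝ => (1-r)⁻¹ * Lg (1-r) ^ (-β))
      volume (1/2) T := by
    apply ContinuousOn.intervalIntegrable
    rw [Set.uIcc_of_le hT]
    exact contOn_D (by norm_num) hT1
  rw [intervalIntegral.integral_eq_sub_of_hasDerivAt hderiv hint]
  have hLT : 0 < Lg (1 - T) := Lg_pos (by linarith) (by linarith)
  have h2 : Φ T ≤ 0 := by
    rw [hΦdef]
    simp only
    have := Real.rpow_pos_of_pos hLT (1-β)
    nlinarith [inv_pos.mpr (show (0:ℝ) < β - 1 by linarith)]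
  have h3 : Φ (1/2) = -(β-1)⁻¹ * Lg (1/2) ^ (1-β) := by
    rw [hΦdef]
    norm_num
  rw [h3]
  linarith
  
/-- divergence for `β = 1`. -/
lemma not_II_D1 : ¬ IntervalIntegrable (fun r : ℝ => (1-r)⁻¹ * (Lg (1-r))⁻¹)
    volume (1/2) 1 := by
  intro hII
  set D1 : ℝ → ℝ := fun r => (1-r)⁻¹ * (Lg (1-r))⁻¹ with hD1def
  have hD1nonneg : ∀ r ∈ Icc (1/2:ℝ) 1, 0 ≤ D1 r := by
    intro r hr
    have h1 : (0:ℝ) ≤ 1 - r := by have := hr.2; linarith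
    have h2 : (0:ℝ) ≤ Lg (1-r) := by
      rw [Lg]
      have := Real.log_nonpos h1 (by have := hr.1; linarith)
      linarith
    positivity
  set B : ℝ := ∫ r in (1/2:ℝ)..1, D1 r with hBdef
  have hB : 0 ≤ B := intervalIntegral.integral_nonneg (by norm_num) hD1nonneg
  have hlog2 : (0:ℝ) < Real.log 2 := Real.log_pos (by norm_num)
  have hL12 : Lg (1/2:ℝ) = 1 + Real.log 2 := by
    rw [Lg, one_div, Real.log_inv]
    ring
  set X : ℝ := B + Real.log (1 + Real.log 2) + 1 with hXdef
  have hlogpos : 0 ≤ Real.log (1 + Real.log 2) := Real.log_nonneg (by linarith)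
  have hX1 : 1 ≤ X := by rw [hXdef]; linarith
  set T : ℝ := 1 - Real.exp (1 - Real.exp X) with hTdef
  have he2 : (2:ℝ) < Real.exp 1 := by
    have := Real.exp_one_gt_d9
    linarith
  have hexpX : (2:ℝ) < Real.exp X := lt_of_lt_of_le he2 (Real.exp_le_exp.mpr hX1)
  have hT1 : T < 1 := by
    rw [hTdef]
    have := Real.exp_pos (1 - Real.exp X)
    linarith
  have hThalf : 1/2 ≤ T := by
    rw [hTdef]
    have h4 : Real.exp (1 - Real.exp X) ≤ Real.exp (-1) :=
      Real.exp_le_exp.mpr (by linarith)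
    have h5 : Real.exp (-1) < 1/2 := by
      rw [Real.exp_neg]
      rw [inv_lt_comm₀ (Real.exp_pos 1) (by norm_num)]
      simpa using he2
    linarith
  -- FTC on [1/2, T]
  set Ψ : ℝ → ℝ := fun r => Real.log (Lg (1-r)) with hΨdef
  have hderiv : ∀ x ∈ Set.uIcc (1/2:ℝ) T, HasDerivAt Ψ (D1 x) x := by
    intro x hx
    rw [Set.uIcc_of_le hThalf] at hx
    have hx1 : x < 1 := lt_of_le_of_lt hx.2 hT1
    have h1 : (0:ℝ) < 1 - x := by linarith
    have hL : 0 < Lg (1 - x) := Lg_pos h1.le (by linarith [hx.1])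
    have hu := hasDerivAt_LgOneSub hx1
    have := (Real.hasDerivAt_log hL.ne').comp x hu
    rw [hD1def]
    exact this.congr_deriv (by beta_reduce; ring)
  have hint : IntervalIntegrable D1 volume (1/2) T := by
    apply ContinuousOn.intervalIntegrable
    rw [Set.uIcc_of_le hThalf]
    intro x hx
    have h1 : (0:ℝ) < 1 - x := by have := hx.2; linarith
    have hL : 0 < Lg (1 - x) := Lg_pos h1.le (by linarith [hx.1])
    apply ContinuousAt.continuousWithinAt
    apply ContinuousAt.mul
    · exact ((continuous_const.sub continuous_id).continuousAt).inv₀ h1.ne'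
    · have hcont : ContinuousAt (fun x : ℝ => Lg (1-x)) x :=
        continuousAt_const.sub
          ((Real.continuousAt_log h1.ne').comp ((continuous_const.sub continuous_id).continuousAt))
      exact hcont.inv₀ hL.ne' 
  have hval : (∫ r in (1/2:ℝ)..T, D1 r) = Ψ T - Ψ (1/2) :=
    intervalIntegral.integral_eq_sub_of_hasDerivAt hderiv hint
  have hΨT : Ψ T = X := by
    rw [hΨdef, hTdef]
    simp only
    rw [show (1:ℝ) - (1 - Real.exp (1 - Real.exp X)) = Real.exp (1 - Real.exp X) by ring,
      Lg, Real.log_exp, show (1:ℝ) - (1 - Real.exp X) = Real.exp X by ring, Real.log_exp]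
  have hΨhalf : Ψ (1/2) = Real.log (1 + Real.log 2) := by
    rw [hΨdef]
    simp only
    rw [show (1:ℝ) - 1/2 = 1/2 by norm_num, hL12]
  have hmono : (∫ r in (1/2:ℝ)..T, D1 r) ≤ B := by
    rw [hBdef]
    apply intervalIntegral.integral_mono_interval le_rfl hThalf hT1.le _ hII
    filter_upwards [ae_restrict_mem measurableSet_Ioc] with x hx
    exact hD1nonneg x ⟨hx.1.le, hx.2⟩
  rw [hval, hΨT, hΨhalf, hXdef] at hmono
  linarith



lemma pow_combine {a L qt αe ce C : ℝ} (ha : 0 < a) (hL : 0 < L) (hqt : 0 < qt)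
    (hC : 0 ≤ C) :
    a ^ (αe * qt - 1) * (C * (a ^ (-αe) * L ^ (-ce))) ^ qt =
      C ^ qt * (a⁻¹ * L ^ (-(ce * qt))) := by
  rw [Real.mul_rpow hC (by positivity),
    Real.mul_rpow (Real.rpow_nonneg ha.le _) (Real.rpow_nonneg hL.le _),
    ← Real.rpow_mul ha.le, ← Real.rpow_mul hL.le,
    show -αe * qt = -(αe * qt) by ring, show -ce * qt = -(ce * qt) by ring]
  have h1 : a ^ (αe * qt - 1) * a ^ (-(αe * qt)) = a⁻¹ := by
    rw [← Real.rpow_add ha, show αe * qt - 1 + -(αe * qt) = -1 by ring,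
      Real.rpow_neg ha.le, Real.rpow_one]
  calc a ^ (αe * qt - 1) * (C ^ qt * (a ^ (-(αe * qt)) * L ^ (-(ce * qt))))
      = C ^ qt * ((a ^ (αe * qt - 1) * a ^ (-(αe * qt))) * L ^ (-(ce * qt))) := by ring
    _ = C ^ qt * (a⁻¹ * L ^ (-(ce * qt))) := by rw [h1]


end

/-- Lemma B: `(1-z)^{-(α+1/p)} (log(e/(1-z)))^{-c} ∈ H(p,q,α)` iff `c > 1/q`. -/
theorem powLogFun_mem_H_iff (p q : ℝ≥0∞) (α c : ℝ)
    (hp : 0 < p) (hq : 0 < q) (hq' : q ≠ ⊤) (hα : 0 < α) :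
    MemH p q α (fun z : ℂ =>
        (1 - z) ^ (-((α + p⁻¹.toReal : ℝ) : ℂ)) *
          Complex.log (Complex.exp 1 / (1 - z)) ^ (-(c : ℂ))) ↔
      1 / q.toReal < c := by
  have hqt : 0 < q.toReal := ENNReal.toReal_pos hq.ne' hq'
  have hp0 : p ≠ 0 := hp.ne'
  show MemH p q α (Ffun (α + p⁻¹.toReal) c) ↔ 1 / q.toReal < c
  set lam : ℝ := α + p⁻¹.toReal with hlamdef
  rw [MemH, if_neg hq']
  constructor
  · rintro ⟨-, hInt⟩
    by_contra hnc
    push_neg at hnc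
    have hcq : c * q.toReal ≤ 1 := by
      have := mul_le_mul_of_nonneg_right hnc hqt.le
      rwa [one_div, inv_mul_cancel₀ hqt.ne'] at this
    obtain ⟨M, hM, hlow⟩ := intMean_lower p hp0 α c hα
    have hMq : (0:ℝ) < M ^ q.toReal := Real.rpow_pos_of_pos hM _
    set D1 : ℝ → ℝ := fun r : ℝ => (1-r)⁻¹ * (Lg (1-r))⁻¹ with hD1def
    have hGII : IntervalIntegrable
        (fun r : ℝ => (1 - r) ^ (α * q.toReal - 1) * intMean p (Ffun lam c) r ^ q.toReal)
        volume (1/2) 1 := by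
      apply hInt.mono_set
      rw [Set.uIcc_of_le (by norm_num : (0:ℝ) ≤ 1), Set.uIcc_of_le (by norm_num : (1/2:ℝ) ≤ 1)]
      exact Icc_subset_Icc (by norm_num) le_rfl
    have hmeas : AEStronglyMeasurable (fun r : ℝ => M ^ q.toReal * D1 r)
        ((volume : Measure ℝ).restrict (Set.uIoc (1/2 : ℝ) 1)) := by
      apply Measurable.aestronglyMeasurable
      apply Measurable.const_mul
      exact ((measurable_const.sub measurable_id).inv).mul
        ((measurable_const.sub (Real.measurable_log.comp
          (measurable_const.sub measurable_id))).inv)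
    have hae1 : ∀ᵐ x ∂((volume : Measure ℝ).restrict (Set.uIoc (1/2 : ℝ) 1)), x ≠ (1:ℝ) := by
      apply ae_restrict_of_ae
      rw [ae_iff]
      simp only [ne_eq, not_not]
      rw [show {a : ℝ | a = 1} = {(1:ℝ)} from Set.setOf_eq_eq_singleton]
      exact measure_singleton 1
    have hIID : IntervalIntegrable (fun r : ℝ => M ^ q.toReal * D1 r) volume (1/2) 1 := by
      apply hGII.mono_fun hmeas
      filter_upwards [ae_restrict_mem measurableSet_uIoc, hae1] with x hx hx1
      rw [Set.uIoc_of_le (by norm_num : (1/2:ℝ) ≤ 1)] at hx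
      have hxlt : x < 1 := lt_of_le_of_ne hx.2 hx1
      have hxge : 1/2 ≤ x := hx.1.le
      have hax : (0:ℝ) < 1 - x := by linarith
      have hLx : 0 < Lg (1-x) := Lg_pos hax.le (by linarith)
      have hLx1 : 1 ≤ Lg (1-x) := Lg_one_le hax.le (by linarith)
      have hD1x : 0 ≤ D1 x := by
        rw [hD1def]; positivity
      have hGx : (0:ℝ) ≤ (1 - x) ^ (α * q.toReal - 1) * intMean p (Ffun lam c) x ^ q.toReal := by
        have := intMean_nonneg p lam c (by linarith : (0:ℝ) ≤ x) hxlt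
        positivity
      rw [Real.norm_of_nonneg (by positivity), Real.norm_of_nonneg hGx]
      -- main bound
      have h1 : M * ((1-x) ^ (-α) * Lg (1-x) ^ (-c)) ≤ intMean p (Ffun lam c) x :=
        hlow x hxge hxlt
      have h2 : (M * ((1-x) ^ (-α) * Lg (1-x) ^ (-c))) ^ q.toReal ≤
          intMean p (Ffun lam c) x ^ q.toReal :=
        Real.rpow_le_rpow (by positivity) h1 hqt.le
      have h3 : (1 - x) ^ (α * q.toReal - 1) *
            (M * ((1-x) ^ (-α) * Lg (1-x) ^ (-c))) ^ q.toReal ≤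
          (1 - x) ^ (α * q.toReal - 1) * intMean p (Ffun lam c) x ^ q.toReal :=
        mul_le_mul_of_nonneg_left h2 (Real.rpow_nonneg hax.le _)
      rw [pow_combine hax hLx hqt hM.le] at h3
      refine le_trans ?_ h3
      apply mul_le_mul_of_nonneg_left _ hMq.le
      rw [hD1def]
      apply mul_le_mul_of_nonneg_left _ (by positivity)
      rw [show (Lg (1-x))⁻¹ = Lg (1-x) ^ (-(1:ℝ)) by
        rw [Real.rpow_neg hLx.le, Real.rpow_one]]
      exact Real.rpow_le_rpow_of_exponent_le hLx1 (by linarith)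
    have heq : (fun r : ℝ => (M ^ q.toReal)⁻¹ * (M ^ q.toReal * D1 r)) = D1 := by
      funext r
      field_simp
    have h8 := hIID.const_mul (M ^ q.toReal)⁻¹
    rw [heq] at h8
    exact not_II_D1 h8
  · intro hc'
    have hc : 0 < c := lt_trans (by positivity) hc'
    have hβ : 1 < c * q.toReal := by
      rw [div_lt_iff₀ hqt] at hc'
      linarith
    refine ⟨Ffun_analyticOn lam c, ?_⟩
    obtain ⟨C, hC, hup⟩ := intMean_upper p hp0 α c hα hc
    have hIIA : IntervalIntegrable
        (fun r : ℝ => (1 - r) ^ (α * q.toReal - 1) * intMean p (Ffun lam c) r ^ q.toReal)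
        volume 0 (1/2) := by
      apply ContinuousOn.intervalIntegrable
      rw [Set.uIcc_of_le (by norm_num : (0:ℝ) ≤ 1/2)]
      exact integrand_continuousOn p hp0 lam c (1/2) _ _ (by norm_num) (by norm_num) hqt.le
    have hIIB : IntervalIntegrable
        (fun r : ℝ => (1 - r) ^ (α * q.toReal - 1) * intMean p (Ffun lam c) r ^ q.toReal)
        volume (1/2) 1 := by
      rw [intervalIntegrable_iff_integrableOn_Ioc_of_le (by norm_num : (1/2:ℝ) ≤ 1)]
      set b : ℕ → ℝ := fun n => 1 - (1/2) * (1/((n:ℝ)+1)) with hbdef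
      have hbprop : ∀ n : ℕ, 1/2 ≤ b n ∧ b n < 1 := by
        intro n
        have h1 : 0 < 1/((n:ℝ)+1) := by positivity
        have h2 : 1/((n:ℝ)+1) ≤ 1 := by
          rw [div_le_one (by positivity)]
          simp
        constructor
        · rw [hbdef]; simp only; linarith
        · rw [hbdef]; simp only; linarith
      have hcont : ∀ n : ℕ, ContinuousOn
          (fun r : ℝ => (1 - r) ^ (α * q.toReal - 1) * intMean p (Ffun lam c) r ^ q.toReal)
          (Icc (1/2 : ℝ) (b n)) := by
        intro n
        have hb1 := (hbprop n).1
        have hb2 := (hbprop n).2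
        exact (integrand_continuousOn p hp0 lam c (b n) _ _ (le_trans (by norm_num) hb1) hb2 hqt.le).mono
          (Icc_subset_Icc (by norm_num) le_rfl)
      apply MeasureTheory.integrableOn_Ioc_of_intervalIntegral_norm_bounded_right
        (I := C ^ q.toReal * ((c * q.toReal - 1)⁻¹ * Lg (1/2) ^ (1 - c * q.toReal)))
        (b := b) (l := atTop)
      · intro n
        exact ((hcont n).integrableOn_Icc).mono_set Set.Ioc_subset_Icc_self
      · rw [hbdef]
        have h0 : Tendsto (fun n : ℕ => 1/((n:ℝ)+1)) atTop (nhds 0) :=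
          tendsto_one_div_add_atTop_nhds_zero_nat
        have h1 := (tendsto_const_nhds (x := (1:ℝ)) (f := atTop)).sub
          ((tendsto_const_nhds (x := (1/2:ℝ)) (f := atTop)).mul h0)
        simpa using h1
      · apply Filter.Eventually.of_forall
        intro n
        have hb2 := hbprop n
        have hnorm : ∀ x ∈ Ioc (1/2 : ℝ) (b n),
            ‖(1 - x) ^ (α * q.toReal - 1) * intMean p (Ffun lam c) x ^ q.toReal‖ =
            (1 - x) ^ (α * q.toReal - 1) * intMean p (Ffun lam c) x ^ q.toReal := by
          intro x hx
          have hxlt : x < 1 := lt_of_le_of_lt hx.2 hb2.2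
          have hax : (0:ℝ) ≤ 1 - x := by linarith
          have := intMean_nonneg p lam c (by linarith [hx.1] : (0:ℝ) ≤ x) hxlt
          rw [Real.norm_of_nonneg (by positivity)]
        rw [setIntegral_congr_fun measurableSet_Ioc hnorm,
          ← intervalIntegral.integral_of_le hb2.1]
        have hmono : (∫ x in (1/2 : ℝ)..(b n),
              (1 - x) ^ (α * q.toReal - 1) * intMean p (Ffun lam c) x ^ q.toReal)
            ≤ ∫ x in (1/2 : ℝ)..(b n),
              C ^ q.toReal * ((1-x)⁻¹ * Lg (1-x) ^ (-(c * q.toReal))) := by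
          apply intervalIntegral.integral_mono_on hb2.1
          · exact ((hcont n).mono (by rw [Set.uIcc_of_le hb2.1])).intervalIntegrable
          · apply ContinuousOn.intervalIntegrable
            rw [Set.uIcc_of_le hb2.1]
            exact continuousOn_const.mul (contOn_D (by norm_num) hb2.2)
          · intro x hx
            have hxlt : x < 1 := lt_of_le_of_lt hx.2 hb2.2
            have hax : (0:ℝ) < 1 - x := by linarith
            have hLx : 0 < Lg (1-x) := Lg_pos hax.le (by linarith [hx.1])
            have h1 := hup x hx.1 hxlt
            have h2 : intMean p (Ffun lam c) x ^ q.toReal ≤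
                (C * ((1-x) ^ (-α) * Lg (1-x) ^ (-c))) ^ q.toReal :=
              Real.rpow_le_rpow (intMean_nonneg p lam c (by linarith [hx.1]) hxlt) h1 hqt.le
            calc (1 - x) ^ (α * q.toReal - 1) * intMean p (Ffun lam c) x ^ q.toReal
                ≤ (1 - x) ^ (α * q.toReal - 1) *
                  (C * ((1-x) ^ (-α) * Lg (1-x) ^ (-c))) ^ q.toReal :=
                  mul_le_mul_of_nonneg_left h2 (Real.rpow_nonneg hax.le _)
              _ = C ^ q.toReal * ((1-x)⁻¹ * Lg (1-x) ^ (-(c * q.toReal))) :=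
                  pow_combine hax hLx hqt hC.le
        refine le_trans hmono ?_
        rw [intervalIntegral.integral_const_mul]
        exact mul_le_mul_of_nonneg_left (int_D_bounded hβ (b n) hb2.1 hb2.2)
          (Real.rpow_nonneg hC.le _)
    exact hIIA.trans hIIB
end
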